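/- arXiv:1310.1174 — 10 statements merged into one kernel-verified Lean document; each statement's English description precedes it below -/
import Mathlib

section
/- Let C1 ⊆ F_2^n be a binary 1-perfect code and λ : C1 → F_2 any function. Then the Vasil'ev code C = {(u | u + v | p(u) + λ(v)) : u ∈ F_2^n, v ∈ C1} is a binary 1-perfect code of length 2n + 1, where p(u) denotes the sum of the coordinates of u. -/
/-- `C` is a 1-perfect code over the alphabet `F` with coordinate set `ι`:
minimum distance at least 3 and `|C|·(1 + |ι|·(|F|−1)) = |F|^|ι|`. -/
def IsOnePerfectCode {ι F : Type*} [Fintype ι] [Fintype F] [DecidableEq F]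
    (C : Set (ι → F)) : Prop :=
  (∀ x ∈ C, ∀ y ∈ C, x ≠ y → 3 ≤ hammingDist x y) ∧
  Nat.card C * (1 + Fintype.card ι * (Fintype.card F - 1)) =
    Fintype.card F ^ Fintype.card ι

section VasilievAux

lemma hammingDist_append_aux {m k : ℕ} (a c : Fin m → ZMod 2) (b d : Fin k → ZMod 2) :
    hammingDist (Fin.append a b) (Fin.append c d) = hammingDist a c + hammingDist b d := by
  classical
  simp only [hammingDist, Finset.card_filter]
  rw [Fin.sum_univ_add]
  congr 1 <;> refine Finset.sum_congr rfl fun i _ => ?_ <;>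
    simp [Fin.append_left, Fin.append_right]

lemma hammingDist_add_right_aux {m : ℕ} (a b c : Fin m → ZMod 2) :
    hammingDist (a + c) (b + c) = hammingDist a b := by
  simp [hammingDist, Pi.add_apply, add_left_inj]

lemma sum_eq_hammingNorm_aux {m : ℕ} (x : Fin m → ZMod 2) :
    (∑ i, x i) = (hammingNorm x : ZMod 2) := by
  classical
  simp only [hammingNorm, Finset.card_filter, Nat.cast_sum]
  refine Finset.sum_congr rfl fun i _ => ?_
  have : ∀ z : ZMod 2, z = ((if z ≠ 0 then 1 else 0 : ℕ) : ZMod 2) := by decide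
  exact this (x i)

end VasilievAux

/-- the Vasil'ev construction. If `C1 ⊆ F_2^n` is a binary 1-perfect
code and `λ : C1 → F_2` is any function, then
`C = {(u | u + v | p(u) + λ(v)) : u ∈ F_2^n, v ∈ C1}` is a binary 1-perfect code
of length `2n + 1`, where `p(u)` is the sum of the coordinates of `u`. -/
theorem vasiliev_construction {n : ℕ} (C1 : Set (Fin n → ZMod 2))
    (hC1 : IsOnePerfectCode C1) (lam : (Fin n → ZMod 2) → ZMod 2) :
    IsOnePerfectCode
      {w : Fin (n + n + 1) → ZMod 2 |
        ∃ u : Fin n → ZMod 2, ∃ v ∈ C1,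
          w = Fin.append (Fin.append u (u + v)) (fun _ : Fin 1 => (∑ i, u i) + lam v)} := by
  classical
  obtain ⟨hd, hc⟩ := hC1
  constructor
  · -- minimum distance at least 3
    rintro x ⟨u1, v1, hv1, rfl⟩ y ⟨u2, v2, hv2, rfl⟩ hne
    rw [hammingDist_append_aux, hammingDist_append_aux]
    by_cases hv : v1 = v2
    · subst hv
      have hu : u1 ≠ u2 := fun h => hne (by rw [h])
      have h2 : hammingDist (u1 + v1) (u2 + v1) = hammingDist u1 u2 :=
        hammingDist_add_right_aux u1 u2 v1
      have h1 : 1 ≤ hammingDist u1 u2 := by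
        rcases Nat.eq_zero_or_pos (hammingDist u1 u2) with h | h
        · exact absurd (hammingDist_eq_zero.mp h) hu
        · exact h
      rcases Nat.lt_or_ge (hammingDist u1 u2) 2 with h | h
      · have hd1 : hammingDist u1 u2 = 1 := by omega
        have hsum : (∑ i, u1 i) ≠ ∑ i, u2 i := by
          intro hs
          have : (∑ i, (u1 - u2) i) = 1 := by
            rw [sum_eq_hammingNorm_aux, sub_eq_neg_add, ← hammingDist_eq_hammingNorm, hammingDist_comm, hd1]
            norm_num
          simp only [Pi.sub_apply, Finset.sum_sub_distrib, hs, sub_self] at this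
          exact one_ne_zero this.symm
        have h3 : hammingDist (fun _ : Fin 1 => (∑ i, u1 i) + lam v1)
            (fun _ : Fin 1 => (∑ i, u2 i) + lam v1) = 1 := by
          have : ((∑ i, u1 i) + lam v1) ≠ ((∑ i, u2 i) + lam v1) := by
            simpa using hsum
          simp [hammingDist, this]
        omega
      · omega
    · have h3 : 3 ≤ hammingDist v1 v2 := hd v1 hv1 v2 hv2 hv
      have htri := hammingDist_triangle (u2 + v1) (u1 + v1) (u2 + v2)
      have e1 : hammingDist (u2 + v1) (u2 + v2) = hammingDist v1 v2 := by
        simp [hammingDist, add_right_inj]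
      have e2 : hammingDist (u2 + v1) (u1 + v1) = hammingDist u1 u2 := by
        rw [hammingDist_add_right_aux, hammingDist_comm]
      rw [e1, e2] at htri
      omega
  · -- cardinality
    set f : ((Fin n → ZMod 2) × (Fin n → ZMod 2)) → (Fin (n + n + 1) → ZMod 2) :=
      fun p => Fin.append (Fin.append p.1 (p.1 + p.2)) (fun _ : Fin 1 => (∑ i, p.1 i) + lam p.2)
      with hf_def
    have hf : Function.Injective f := by
      rintro ⟨u1, v1⟩ ⟨u2, v2⟩ h
      have hu : u1 = u2 := by
        funext i
        have := congrFun h (Fin.castAdd 1 (Fin.castAdd n i))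
        simpa [hf_def, Fin.append_left] using this
      have hv : v1 = v2 := by
        funext i
        have := congrFun h (Fin.castAdd 1 (Fin.natAdd n i))
        simp only [hf_def, Fin.append_left, Fin.append_right, Pi.add_apply, hu] at this
        exact add_left_cancel this
      simp [hu, hv]
    have hset : {w : Fin (n + n + 1) → ZMod 2 |
          ∃ u : Fin n → ZMod 2, ∃ v ∈ C1,
            w = Fin.append (Fin.append u (u + v)) (fun _ : Fin 1 => (∑ i, u i) + lam v)}
        = f '' (Set.univ ×ˢ C1) := by
      ext w
      constructor
      · rintro ⟨u, v, hv, rfl⟩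
        exact ⟨(u, v), ⟨Set.mem_univ _, hv⟩, rfl⟩
      · rintro ⟨⟨u, v⟩, ⟨-, hv⟩, rfl⟩
        exact ⟨u, v, hv, rfl⟩
    rw [hset, Nat.card_coe_set_eq, Set.ncard_image_of_injective _ hf,
      ← Nat.card_coe_set_eq]
    have hprod : Nat.card ↥(Set.univ ×ˢ C1 : Set ((Fin n → ZMod 2) × (Fin n → ZMod 2)))
        = 2 ^ n * Nat.card C1 := by
      rw [Nat.card_congr (Equiv.Set.prod _ _), Nat.card_prod]
      congr 1
      rw [Nat.card_congr (Equiv.Set.univ _), Nat.card_eq_fintype_card]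
      simp
    rw [hprod]
    simp only [Fintype.card_fin, ZMod.card] at hc ⊢
    set c := Nat.card C1
    have h21 : (2 : ℕ) - 1 = 1 := rfl
    simp only [h21] at hc ⊢
    have hc' : c * (n + 1) = 2 ^ n := by rw [← hc]; ring
    calc 2 ^ n * c * (1 + (n + n + 1) * 1)
        = (c * (n + 1)) * 2 ^ n * 2 := by ring
      _ = 2 ^ n * 2 ^ n * 2 := by rw [hc']
      _ = 2 ^ (n + n + 1) := by rw [pow_add, pow_add, pow_one]
end

section
/- Let C1 ⊆ F_q^n be a q-ary 1-perfect code and λ : C1 → F_q any function, and let α_1, ..., α_{q−1} be all nonzero elements of F_q. Then the code C = {(u_1 | u_2 | ... | u_{q−1} | v + Σ_i u_i | Σ_i α_i p(u_i) + λ(v)) : u_1,...,u_{q−1} ∈ F_q^n, v ∈ C1} is a q-ary 1-perfect code of length qn + 1 (Lindström–Schönheim construction). -/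
open Finset

lemma hd_sumElim {A B γ : Type*} [Fintype A] [Fintype B] [DecidableEq γ]
    (f f' : A → γ) (g g' : B → γ) :
    hammingDist (Sum.elim f g) (Sum.elim f' g') = hammingDist f f' + hammingDist g g' := by
  classical
  simp only [hammingDist]
  rw [← Finset.card_toLeft_add_card_toRight]
  congr 1 <;> { congr 1; ext x; simp }

lemma hd_unit {γ : Type*} [DecidableEq γ] (f g : Unit → γ) :
    hammingDist f g = if f () = g () then 0 else 1 := by
  simp only [hammingDist]
  split
  · next h => simp [Finset.filter_eq_empty_iff, h]
  · next h => rw [Finset.card_eq_one]; exact ⟨(), by ext y; simp [h]⟩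

lemma hd_add_left {ι γ : Type*} [Fintype ι] [DecidableEq γ] [AddGroup γ]
    (a b c : ι → γ) :
    hammingDist (fun j => a j + b j) (fun j => a j + c j) = hammingDist b c := by
  simp only [hammingDist]
  congr 1; ext j; simp

lemma hd_add_right {ι γ : Type*} [Fintype ι] [DecidableEq γ] [AddGroup γ]
    (a b c : ι → γ) :
    hammingDist (fun j => b j + a j) (fun j => c j + a j) = hammingDist b c := by
  simp only [hammingDist]
  congr 1; ext j; simp

lemma hd_colsum_le {K J γ : Type*} [Fintype K] [Fintype J] [DecidableEq γ] [AddCommMonoid γ]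
    (u u' : K → J → γ) :
    hammingDist (fun j => ∑ k, u k j) (fun j => ∑ k, u' k j) ≤
      hammingDist (fun p : K × J => u p.1 p.2) (fun p : K × J => u' p.1 p.2) := by
  classical
  rcases isEmpty_or_nonempty K with h | h
  · have : (fun j : J => ∑ k, u k j) = fun j => ∑ k, u' k j := by
      funext j; rw [Finset.univ_eq_empty]; simp
    rw [this, hammingDist_self]; exact Nat.zero_le _
  simp only [hammingDist]
  apply Finset.card_le_card_of_injOn
    (fun j => ((if hj : ∃ k, u k j ≠ u' k j then hj.choose else h.some), j))
  · intro j hj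
    rw [Finset.mem_coe, Finset.mem_filter] at hj
    have hex : ∃ k, u k j ≠ u' k j := by
      by_contra hne
      push_neg at hne
      exact hj.2 (Finset.sum_congr rfl fun k _ => hne k)
    rw [Finset.mem_coe, Finset.mem_filter]
    refine ⟨Finset.mem_univ _, ?_⟩
    simp only [dif_pos hex]
    exact hex.choose_spec
  · intro j1 _ j2 _ hj
    exact congrArg Prod.snd hj


lemma ls_arith (q m n c1 : ℕ) (hm : m + 1 = q) (hcard : c1 * (1 + n * m) = q ^ n) :
    q ^ (n * m) * c1 * (1 + (m * n + (n + 1)) * m) = q ^ (m * n + (n + 1)) := by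
  have key : 1 + (m * n + (n + 1)) * m = (m + 1) * (1 + n * m) := by ring
  calc q ^ (n * m) * c1 * (1 + (m * n + (n + 1)) * m)
      = q ^ (n * m) * ((m + 1) * (c1 * (1 + n * m))) := by rw [key]; ring
    _ = q ^ (n * m) * (q * q ^ n) := by rw [hm, hcard]
    _ = q ^ (m * n + (n + 1)) := by rw [← pow_succ' q n, ← pow_add]; ring_nf



/-- the Lindström–Schönheim construction. Given a `q`-ary 1-perfect
code `C1 ⊆ F_q^n`, any function `λ` on `C1` with values in `F_q`, and an
enumeration `α_1, …, α_{q−1}` of the nonzero elements of `F_q`, the code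
`{(u_1 | ⋯ | u_{q−1} | v + Σ_i u_i | Σ_i α_i p(u_i) + λ(v))}` is a
`q`-ary 1-perfect code of length `qn + 1`.  The `qn + 1` coordinates are
indexed by `(Fin (q−1) × Fin n) ⊕ Fin n ⊕ Unit`. -/
theorem lindstrom_schonheim_construction {F : Type*} [Field F] [Fintype F] [DecidableEq F]
    {n : ℕ} (C1 : Set (Fin n → F)) (hC1 : IsOnePerfectCode C1)
    (lam : (Fin n → F) → F)
    (α : Fin (Fintype.card F - 1) → F)
    (hα : Function.Injective α) (hα' : Set.range α = {x : F | x ≠ 0}) :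
    IsOnePerfectCode
      {w : (Fin (Fintype.card F - 1) × Fin n) ⊕ (Fin n ⊕ Unit) → F |
        ∃ u : Fin (Fintype.card F - 1) → Fin n → F, ∃ v ∈ C1,
          w = Sum.elim (fun p => u p.1 p.2)
            (Sum.elim (fun j => v j + ∑ k, u k j)
              (fun _ => (∑ k, α k * ∑ j, u k j) + lam v))} := by
  obtain ⟨hmin, hcard0⟩ := hC1
  have hcard : Nat.card C1 * (1 + n * (Fintype.card F - 1)) = Fintype.card F ^ n := by
    simpa [Fintype.card_fin] using hcard0
  refine ⟨?_, ?_⟩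
  · -- minimum distance at least 3
      classical
      have hα0 : ∀ k, α k ≠ 0 := fun k => by
        have : α k ∈ Set.range α := Set.mem_range_self k
        rw [hα'] at this
        exact this
      rintro x ⟨u, v, hv, rfl⟩ y ⟨u', v', hv', rfl⟩ hxy
      rw [hd_sumElim, hd_sumElim]
      by_cases huu : u = u'
      · -- same u, so v ≠ v'; distance on middle block is ≥ 3
        subst huu
        have hvv : v ≠ v' := by
          rintro rfl; exact hxy rfl
        have h3 : 3 ≤ hammingDist v v' := hmin v hv v' hv' hvv
        have heq : hammingDist (fun j => v j + ∑ k, u k j) (fun j => v' j + ∑ k, u k j)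
            = hammingDist v v' := hd_add_right _ _ _
        have h5 : 3 ≤ hammingDist (fun j => v j + ∑ k, u k j) (fun j => v' j + ∑ k, u k j) :=
          heq ▸ h3
        exact le_trans h5 (le_trans (Nat.le_add_right _ _) (Nat.le_add_left _ _))
      by_cases hvv : v = v'
      swap
      · -- v ≠ v' : triangle inequality argument
        have h3 : 3 ≤ hammingDist v v' := hmin v hv v' hv' hvv
        have tri : hammingDist v v' ≤
            hammingDist (fun j => v j + ∑ k, u k j) (fun j => v' j + ∑ k, u' k j)
            + hammingDist (fun j => (∑ k, u' k j)) (fun j => (∑ k, u k j)) := by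
          have h1 : hammingDist v v'
              = hammingDist (fun j => v j + ∑ k, u k j) (fun j => v' j + ∑ k, u k j) :=
            (hd_add_right _ _ _).symm
          have h2 := hammingDist_triangle (fun j => v j + ∑ k, u k j)
            (fun j => v' j + ∑ k, u' k j) (fun j => v' j + ∑ k, u k j)
          have h4 : hammingDist (fun j => v' j + ∑ k, u' k j) (fun j => v' j + ∑ k, u k j)
              = hammingDist (fun j => (∑ k, u' k j)) (fun j => (∑ k, u k j)) := hd_add_left _ _ _
          rw [h1]
          rw [h4] at h2
          exact h2
        have hss : hammingDist (fun j => (∑ k, u' k j)) (fun j => (∑ k, u k j)) ≤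
            hammingDist (fun p : Fin (Fintype.card F - 1) × Fin n => u p.1 p.2)
              (fun p => u' p.1 p.2) := by
          rw [hammingDist_comm]
          exact hd_colsum_le u u'
        set a := hammingDist (fun p : Fin (Fintype.card F - 1) × Fin n => u p.1 p.2)
            (fun p => u' p.1 p.2) with ha
        set b := hammingDist (fun j => v j + ∑ k, u k j) (fun j => v' j + ∑ k, u' k j) with hb
        set c := hammingDist (fun j => (∑ k, u' k j)) (fun j => (∑ k, u k j)) with hc
        have : 3 ≤ b + c := le_trans h3 tri
        omega
      · -- v = v' : combinatorial case
        subst hvv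
        by_cases h3u : 3 ≤ hammingDist
            (fun p : Fin (Fintype.card F - 1) × Fin n => u p.1 p.2) (fun p => u' p.1 p.2)
        · exact le_trans h3u (Nat.le_add_right _ _)
        set d := Finset.filter
            (fun p : Fin (Fintype.card F - 1) × Fin n => u p.1 p.2 ≠ u' p.1 p.2)
            Finset.univ with hd
        have hdU : hammingDist (fun p : Fin (Fintype.card F - 1) × Fin n => u p.1 p.2)
            (fun p => u' p.1 p.2) = d.card := by
          simp only [hammingDist, hd]
        have hmem : ∀ p : Fin (Fintype.card F - 1) × Fin n,
            p ∈ d ↔ u p.1 p.2 ≠ u' p.1 p.2 := by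
          intro p; rw [hd, Finset.mem_filter]; simp
        have h0 : d.card ≠ 0 := by
          rw [← hdU, hammingDist_ne_zero]
          intro h
          exact huu (funext fun k => funext fun j => congrFun h (k, j))
        rw [hdU] at h3u
        rw [hdU]
        have hc12 : d.card = 1 ∨ d.card = 2 := by omega
        rcases hc12 with h1 | h2
        · -- exactly one difference, at (k, j)
          obtain ⟨p0, hp0⟩ := Finset.card_eq_one.mp h1
          obtain ⟨k, j⟩ := p0
          have hiff : ∀ p : Fin (Fintype.card F - 1) × Fin n,
              u p.1 p.2 ≠ u' p.1 p.2 ↔ p = (k, j) := by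
            intro p; rw [← hmem p, hp0, Finset.mem_singleton]
          have hne : u k j ≠ u' k j := (hiff (k, j)).2 rfl
          have heqo : ∀ p : Fin (Fintype.card F - 1) × Fin n,
              p ≠ (k, j) → u p.1 p.2 = u' p.1 p.2 := by
            intro p hp
            by_contra hne'
            exact hp ((hiff p).1 hne')
          have hsum1 : ∑ k', (u k' j - u' k' j) = u k j - u' k j :=
            Finset.sum_eq_single_of_mem k (Finset.mem_univ k)
              (fun k' _ hk' => sub_eq_zero.mpr
                (heqo (k', j) (fun h => hk' (Prod.ext_iff.mp h).1)))
          have hMne : (fun j' => v j' + ∑ k', u k' j') ≠ (fun j' => v j' + ∑ k', u' k' j') := by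
            intro h
            have h2 := congrFun h j
            have h3 : (∑ k', u k' j) = ∑ k', u' k' j := add_left_cancel h2
            rw [Finset.sum_sub_distrib, h3, sub_self] at hsum1
            exact hne (sub_eq_zero.mp hsum1.symm)
          have hM : 1 ≤ hammingDist (fun j' => v j' + ∑ k', u k' j')
              (fun j' => v j' + ∑ k', u' k' j') :=
            Nat.one_le_iff_ne_zero.mpr (hammingDist_ne_zero.mpr hMne)
          have hTsum : ∑ k', (α k' * ∑ j', u k' j' - α k' * ∑ j', u' k' j')
              = α k * (u k j - u' k j) := by
            rw [Finset.sum_eq_single_of_mem k (Finset.mem_univ k) (fun k' _ hk' => by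
              rw [Finset.sum_congr rfl fun j' _ =>
                heqo (k', j') (fun h => hk' (Prod.ext_iff.mp h).1)]
              exact sub_self _)]
            rw [← mul_sub, ← Finset.sum_sub_distrib,
              Finset.sum_eq_single_of_mem j (Finset.mem_univ j)
                (fun j' _ hj' => sub_eq_zero.mpr
                  (heqo (k, j') (fun h => hj' (Prod.ext_iff.mp h).2)))]
          have hLne : (fun _ : Unit => (∑ k', α k' * ∑ j', u k' j') + lam v) ≠
              (fun _ : Unit => (∑ k', α k' * ∑ j', u' k' j') + lam v) := by
            intro h
            have h2 := congrFun h ()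
            have h3 : (∑ k', α k' * ∑ j', u k' j') = ∑ k', α k' * ∑ j', u' k' j' :=
              add_right_cancel h2
            rw [Finset.sum_sub_distrib, h3, sub_self] at hTsum
            exact mul_ne_zero (hα0 k) (sub_ne_zero.mpr hne) hTsum.symm
          have hL : 1 ≤ hammingDist (fun _ : Unit => (∑ k', α k' * ∑ j', u k' j') + lam v)
              (fun _ : Unit => (∑ k', α k' * ∑ j', u' k' j') + lam v) :=
            Nat.one_le_iff_ne_zero.mpr (hammingDist_ne_zero.mpr hLne)
          omega
        · -- exactly two differences
          obtain ⟨p1, p2, hp12, hpair⟩ := Finset.card_eq_two.mp h2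
          obtain ⟨k1, j1⟩ := p1
          obtain ⟨k2, j2⟩ := p2
          have hiff : ∀ p : Fin (Fintype.card F - 1) × Fin n,
              u p.1 p.2 ≠ u' p.1 p.2 ↔ (p = (k1, j1) ∨ p = (k2, j2)) := by
            intro p; rw [← hmem p, hpair]; simp
          have hne1 : u k1 j1 ≠ u' k1 j1 := (hiff _).2 (Or.inl rfl)
          have hne2 : u k2 j2 ≠ u' k2 j2 := (hiff _).2 (Or.inr rfl)
          have heqo : ∀ p : Fin (Fintype.card F - 1) × Fin n,
              p ≠ (k1, j1) → p ≠ (k2, j2) → u p.1 p.2 = u' p.1 p.2 := by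
            intro p hpa hpb
            by_contra hne'
            rcases (hiff p).1 hne' with h | h
            exacts [hpa h, hpb h]
          by_cases hjj : j1 = j2
          · -- both differences in the same column j1
            subst hjj
            have hkk : k1 ≠ k2 := by
              rintro rfl; exact hp12 rfl
            have hs : ∑ k', (u k' j1 - u' k' j1)
                = (u k1 j1 - u' k1 j1) + (u k2 j1 - u' k2 j1) := by
              have hstep : ∑ k', (u k' j1 - u' k' j1)
                  = ∑ k' ∈ ({k1, k2} : Finset _), (u k' j1 - u' k' j1) := by
                refine (Finset.sum_subset (Finset.subset_univ _) ?_).symm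
                intro k' _ hk'
                simp only [Finset.mem_insert, Finset.mem_singleton, not_or] at hk'
                exact sub_eq_zero.mpr (heqo (k', j1)
                  (fun h => hk'.1 (Prod.ext_iff.mp h).1)
                  (fun h => hk'.2 (Prod.ext_iff.mp h).1))
              rw [hstep, Finset.sum_pair hkk]
            have hT : ∑ k', (α k' * ∑ j', u k' j' - α k' * ∑ j', u' k' j')
                = α k1 * (u k1 j1 - u' k1 j1) + α k2 * (u k2 j1 - u' k2 j1) := by
              have hstep : ∑ k', (α k' * ∑ j', u k' j' - α k' * ∑ j', u' k' j')
                  = ∑ k' ∈ ({k1, k2} : Finset _),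
                      (α k' * ∑ j', u k' j' - α k' * ∑ j', u' k' j') := by
                refine (Finset.sum_subset (Finset.subset_univ _) ?_).symm
                intro k' _ hk'
                simp only [Finset.mem_insert, Finset.mem_singleton, not_or] at hk'
                rw [Finset.sum_congr rfl fun j' _ => heqo (k', j')
                  (fun h => hk'.1 (Prod.ext_iff.mp h).1)
                  (fun h => hk'.2 (Prod.ext_iff.mp h).1)]
                exact sub_self _
              rw [hstep, Finset.sum_pair hkk]
              congr 1
              · rw [← mul_sub, ← Finset.sum_sub_distrib,
                  Finset.sum_eq_single_of_mem j1 (Finset.mem_univ j1)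
                    (fun j' _ hj' => sub_eq_zero.mpr (heqo (k1, j')
                      (fun h => hj' (Prod.ext_iff.mp h).2)
                      (fun h => hkk (Prod.ext_iff.mp h).1)))]
              · rw [← mul_sub, ← Finset.sum_sub_distrib,
                  Finset.sum_eq_single_of_mem j1 (Finset.mem_univ j1)
                    (fun j' _ hj' => sub_eq_zero.mpr (heqo (k2, j')
                      (fun h => hkk (Prod.ext_iff.mp h).1.symm)
                      (fun h => hj' (Prod.ext_iff.mp h).2)))]
            have h1le : 1 ≤ hammingDist (fun j' => v j' + ∑ k', u k' j')
                  (fun j' => v j' + ∑ k', u' k' j')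
                + hammingDist (fun _ : Unit => (∑ k', α k' * ∑ j', u k' j') + lam v)
                  (fun _ : Unit => (∑ k', α k' * ∑ j', u' k' j') + lam v) := by
              by_contra hcon
              push_neg at hcon
              have hM0 : hammingDist (fun j' => v j' + ∑ k', u k' j')
                  (fun j' => v j' + ∑ k', u' k' j') = 0 := by omega
              have hL0 : hammingDist (fun _ : Unit => (∑ k', α k' * ∑ j', u k' j') + lam v)
                  (fun _ : Unit => (∑ k', α k' * ∑ j', u' k' j') + lam v) = 0 := by omega
              have hMeq := hammingDist_eq_zero.mp hM0
              have hLeq := hammingDist_eq_zero.mp hL0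
              have hsj : (∑ k', u k' j1) = ∑ k', u' k' j1 := by
                have := congrFun hMeq j1
                exact add_left_cancel this
              have hTj : (∑ k', α k' * ∑ j', u k' j') = ∑ k', α k' * ∑ j', u' k' j' := by
                have := congrFun hLeq ()
                exact add_right_cancel this
              rw [Finset.sum_sub_distrib, hsj, sub_self] at hs
              rw [Finset.sum_sub_distrib, hTj, sub_self] at hT
              have hkey : (α k1 - α k2) * (u k1 j1 - u' k1 j1) = 0 := by
                linear_combination -hT + α k2 * hs
              rcases mul_eq_zero.mp hkey with h | h
              · exact hkk (hα (sub_eq_zero.mp h))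
              · exact hne1 (sub_eq_zero.mp h)
            omega
          · -- differences in two distinct columns j1 ≠ j2
            have hs1 : (∑ k', u k' j1) ≠ ∑ k', u' k' j1 := by
              have hsum : ∑ k', (u k' j1 - u' k' j1) = u k1 j1 - u' k1 j1 :=
                Finset.sum_eq_single_of_mem k1 (Finset.mem_univ k1)
                  (fun k' _ hk' => sub_eq_zero.mpr (heqo (k', j1)
                    (fun h => hk' (Prod.ext_iff.mp h).1)
                    (fun h => hjj (Prod.ext_iff.mp h).2)))
              intro hEq
              rw [Finset.sum_sub_distrib, hEq, sub_self] at hsum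
              exact hne1 (sub_eq_zero.mp hsum.symm)
            have hs2 : (∑ k', u k' j2) ≠ ∑ k', u' k' j2 := by
              have hsum : ∑ k', (u k' j2 - u' k' j2) = u k2 j2 - u' k2 j2 :=
                Finset.sum_eq_single_of_mem k2 (Finset.mem_univ k2)
                  (fun k' _ hk' => sub_eq_zero.mpr (heqo (k', j2)
                    (fun h => hjj ((Prod.ext_iff.mp h).2).symm)
                    (fun h => hk' (Prod.ext_iff.mp h).1)))
              intro hEq
              rw [Finset.sum_sub_distrib, hEq, sub_self] at hsum
              exact hne2 (sub_eq_zero.mp hsum.symm)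
            have hM2 : 2 ≤ hammingDist (fun j' => v j' + ∑ k', u k' j')
                (fun j' => v j' + ∑ k', u' k' j') := by
              simp only [hammingDist]
              have hsub : ({j1, j2} : Finset (Fin n)) ⊆
                  Finset.filter (fun j' => ¬ (v j' + ∑ k', u k' j' = v j' + ∑ k', u' k' j'))
                    Finset.univ := by
                intro j hj
                rw [Finset.mem_filter]
                refine ⟨Finset.mem_univ _, ?_⟩
                rcases Finset.mem_insert.mp hj with rfl | hj
                · exact fun h => hs1 (add_left_cancel h)
                · rw [Finset.mem_singleton] at hj
                  subst hj
                  exact fun h => hs2 (add_left_cancel h)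
              refine le_trans ?_ (Finset.card_le_card hsub)
              rw [Finset.card_pair hjj]
            omega
  · -- cardinality
      classical
      have hq : 2 ≤ Fintype.card F := Fintype.one_lt_card
      have hbij : Nat.card ((Fin (Fintype.card F - 1) → Fin n → F) × C1) =
          Nat.card {w : (Fin (Fintype.card F - 1) × Fin n) ⊕ (Fin n ⊕ Unit) → F |
            ∃ u : Fin (Fintype.card F - 1) → Fin n → F, ∃ v ∈ C1,
              w = Sum.elim (fun p => u p.1 p.2)
                (Sum.elim (fun j => v j + ∑ k, u k j)
                  (fun _ => (∑ k, α k * ∑ j, u k j) + lam v))} := by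
        apply Nat.card_eq_of_bijective
          (fun x => (⟨Sum.elim (fun p => x.1 p.1 p.2)
                (Sum.elim (fun j => (x.2 : Fin n → F) j + ∑ k, x.1 k j)
                  (fun _ => (∑ k, α k * ∑ j, x.1 k j) + lam x.2)), x.1, x.2, x.2.2, rfl⟩))
        constructor
        · rintro ⟨u, v, hvmem⟩ ⟨u', v', hvmem'⟩ h
          have h2 := congrArg Subtype.val h
          simp only at h2
          have hu : u = u' := by
            funext k j
            exact congrFun h2 (Sum.inl (k, j))
          have hv : v = v' := by
            funext j
            have := congrFun h2 (Sum.inr (Sum.inl j))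
            simp only [Sum.elim_inr, Sum.elim_inl, hu] at this
            exact add_right_cancel this
          simp only [Prod.mk.injEq]
          exact ⟨hu, Subtype.ext hv⟩
        · rintro ⟨w, u, v, hv, rfl⟩
          exact ⟨(u, ⟨v, hv⟩), rfl⟩
      have hcardsum : Fintype.card ((Fin (Fintype.card F - 1) × Fin n) ⊕ (Fin n ⊕ Unit)) =
          (Fintype.card F - 1) * n + (n + 1) := by
        simp [Fintype.card_sum, Fintype.card_prod]
      rw [hcardsum, ← hbij, Nat.card_prod, Nat.card_eq_fintype_card]
      have : Fintype.card (Fin (Fintype.card F - 1) → Fin n → F) =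
          Fintype.card F ^ (n * (Fintype.card F - 1)) := by
        rw [Fintype.card_fun, Fintype.card_fun, Fintype.card_fin, Fintype.card_fin, ← pow_mul]
      rw [this]
      have hm : (Fintype.card F - 1) + 1 = Fintype.card F := Nat.sub_add_cancel (Nat.one_le_of_lt hq)
      exact ls_arith _ _ _ _ hm hcard
end

section
/- Let C0^1,...,C_n^1 and C0^2,...,C_n^2 be two partitions of F_2^n into binary 1-perfect codes of length n, let φ : F_2^n → {0,...,n} assign to u the index k with u ∈ C_k^1, and let π be a permutation of {0,...,n}. Then the code C = {(u | v | p(u)) : u ∈ F_2^n, v ∈ C^2_{π(φ(u))}} is a binary 1-perfect code of length 2n + 1 (doubling construction). -/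
lemma ham_append {m k : ℕ} {α : Type*} [DecidableEq α] (a a' : Fin m → α) (b b' : Fin k → α) :
    hammingDist (Fin.append a b) (Fin.append a' b') = hammingDist a a' + hammingDist b b' := by
  classical
  simp only [hammingDist, Finset.card_filter]
  rw [Fin.sum_univ_add]
  simp [Fin.append_left, Fin.append_right]

lemma append_inj {m k : ℕ} {α : Type*} {a a' : Fin m → α} {b b' : Fin k → α}
    (h : Fin.append a b = Fin.append a' b') : a = a' ∧ b = b' :=
  ⟨funext fun i => by simpa using congrFun h (Fin.castAdd k i),
   funext fun i => by simpa using congrFun h (Fin.natAdd m i)⟩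

lemma sum_add_sum_eq {n : ℕ} (u u' : Fin n → ZMod 2) :
    (∑ i, u i) + (∑ i, u' i) = (hammingDist u u' : ZMod 2) := by
  classical
  rw [← Finset.sum_add_distrib, hammingDist, Finset.card_filter, Nat.cast_sum]
  refine Finset.sum_congr rfl fun i _ => ?_
  have h : ∀ a b : ZMod 2, a + b = ((if a ≠ b then 1 else 0 : ℕ) : ZMod 2) := by decide
  exact h _ _

lemma parity_ne {n : ℕ} {u u' : Fin n → ZMod 2} (h : hammingDist u u' = 1) :
    (∑ i, u i) ≠ ∑ i, u' i := by
  intro heq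
  have := sum_add_sum_eq u u'
  rw [heq, h] at this
  rw [CharTwo.add_self_eq_zero] at this
  exact one_ne_zero this.symm

/-- the doubling construction.  Given two partitions
`C^1_0, …, C^1_n` and `C^2_0, …, C^2_n` of `F_2^n` into binary 1-perfect codes,
the indexing map `φ` of the first partition, and a permutation `π` of
`{0,…,n}`, the code `C = {(u | v | p(u)) : u ∈ F_2^n, v ∈ C^2_{π(φ(u))}}`
is a binary 1-perfect code of length `2n + 1`. -/
theorem doubling_construction {n : ℕ}
    (C1 C2 : Fin (n + 1) → Set (Fin n → ZMod 2))
    (h1perf : ∀ k, IsOnePerfectCode (C1 k))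
    (h2perf : ∀ k, IsOnePerfectCode (C2 k))
    (h1disj : ∀ k l, k ≠ l → Disjoint (C1 k) (C1 l))
    (h2disj : ∀ k l, k ≠ l → Disjoint (C2 k) (C2 l))
    (h1cover : (⋃ k, C1 k) = Set.univ)
    (h2cover : (⋃ k, C2 k) = Set.univ)
    (φ : (Fin n → ZMod 2) → Fin (n + 1)) (hφ : ∀ u, u ∈ C1 (φ u))
    (π : Equiv.Perm (Fin (n + 1))) :
    IsOnePerfectCode
      {w : Fin (n + n + 1) → ZMod 2 |
        ∃ u : Fin n → ZMod 2, ∃ v ∈ C2 (π (φ u)),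
          w = Fin.append (Fin.append u v) (fun _ : Fin 1 => ∑ i, u i)} := by
  classical
  constructor
  · rintro w ⟨u, v, hv, rfl⟩ w' ⟨u', v', hv', rfl⟩ hne
    rw [ham_append, ham_append]
    by_cases huu : u = u'
    · subst huu
      have hvv : v ≠ v' := by
        rintro rfl; exact hne rfl
      have h3 := (h2perf (π (φ u))).1 v hv v' hv' hvv
      omega
    · by_cases hφφ : φ u = φ u'
      · have h3 := (h1perf (φ u)).1 u (hφ u) u' (by rw [hφφ]; exact hφ u') huu
        omega
      · have hvv : v ≠ v' := by
          rintro rfl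
          exact Set.disjoint_left.mp
            (h2disj _ _ fun h => hφφ (π.injective h)) hv hv'
        have hdu : 0 < hammingDist u u' := hammingDist_pos.mpr huu
        have hdv : 0 < hammingDist v v' := hammingDist_pos.mpr hvv
        rcases Nat.lt_or_ge (hammingDist u u') 2 with h2 | h2
        · have h1 : hammingDist u u' = 1 := by omega
          have hsum := parity_ne h1
          have hc : 0 < hammingDist (fun _ : Fin 1 => ∑ i, u i)
              (fun _ : Fin 1 => ∑ i, u' i) :=
            hammingDist_pos.mpr fun h => hsum (congrFun h 0)
          omega
        · omega
  · have hcard2 : ∀ k, Nat.card (C2 k) * (n + 1) = 2 ^ n := by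
      intro k
      have h := (h2perf k).2
      simpa [Nat.add_comm, Nat.mul_comm] using h
    set S := {w : Fin (n + n + 1) → ZMod 2 |
        ∃ u : Fin n → ZMod 2, ∃ v ∈ C2 (π (φ u)),
          w = Fin.append (Fin.append u v) (fun _ : Fin 1 => ∑ i, u i)} with hS
    let f : (Σ u : Fin n → ZMod 2, C2 (π (φ u))) → S := fun x =>
      ⟨Fin.append (Fin.append x.1 x.2.1) (fun _ : Fin 1 => ∑ i, x.1 i),
        ⟨x.1, x.2.1, x.2.2, rfl⟩⟩
    have hbij : Function.Bijective f := by
      constructor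
      · rintro ⟨u, v, hv⟩ ⟨u', v', hv'⟩ h
        simp only [f, Subtype.mk.injEq] at h
        obtain ⟨h1, -⟩ := append_inj h
        obtain ⟨hu, hvv⟩ := append_inj h1
        subst hu; subst hvv; rfl
      · rintro ⟨w, u, v, hv, rfl⟩
        exact ⟨⟨u, ⟨v, hv⟩⟩, rfl⟩
    have hc : Nat.card S = ∑ u : Fin n → ZMod 2, Nat.card (C2 (π (φ u))) := by
      rw [← Nat.card_congr (Equiv.ofBijective f hbij)]
      rw [Nat.card_eq_fintype_card, Fintype.card_sigma]
      exact Finset.sum_congr rfl fun u _ => (Nat.card_eq_fintype_card).symm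
    have key : (∑ u : Fin n → ZMod 2, Nat.card (C2 (π (φ u)))) * (n + 1)
        = 2 ^ n * 2 ^ n := by
      rw [Finset.sum_mul]
      calc ∑ u : Fin n → ZMod 2, Nat.card (C2 (π (φ u))) * (n + 1)
          = ∑ _u : Fin n → ZMod 2, 2 ^ n :=
            Finset.sum_congr rfl fun u _ => hcard2 _
        _ = 2 ^ n * 2 ^ n := by
            simp [Finset.sum_const, Finset.card_univ, Fintype.card_fun, mul_comm]
    simp only [Fintype.card_fin, ZMod.card]
    rw [hc]
    have h2 : 1 + (n + n + 1) * (2 - 1) = (n + 1) * 2 := by omega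
    rw [h2, ← mul_assoc, key]
    rw [pow_add, pow_add, pow_one]
end

section
/- Let C1 be a q-ary 1-perfect code of length n, let R_i(1),...,R_i(t) be pairwise disjoint i-components of C1 (for a fixed coordinate i), and let σ_1,...,σ_t be permutations of F_q. Then C = (C1 \ ∪_s R_i(s)) ∪ (∪_s σ_s(R_i(s))) is a q-ary 1-perfect code of length n, where σ_s(R_i(s)) applies σ_s to the i-th coordinate of every codeword of R_i(s). -/
/-- Two codewords of `C` are adjacent (for coordinate `i`) iff their images
under deletion of coordinate `i` are at Hamming distance exactly 2. -/
def PunctAdj {n : ℕ} {F : Type*} [DecidableEq F] (C : Set (Fin n → F)) (i : Fin n)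
    (a b : Fin n → F) : Prop :=
  a ∈ C ∧ b ∈ C ∧
    hammingDist (fun j : {j : Fin n // j ≠ i} => a j) (fun j : {j : Fin n // j ≠ i} => b j) = 2

/-- `R` is an `i`-component of `C`: the punctured image of `R` is a connected
component of the minimum distance graph of the punctured code `C^i`, i.e. `R`
is the set of codewords reachable from some codeword by the adjacency relation. -/
def IsIComponent {n : ℕ} {F : Type*} [DecidableEq F] (C : Set (Fin n → F)) (i : Fin n)
    (R : Set (Fin n → F)) : Prop :=
  ∃ x ∈ C, R = {y ∈ C | Relation.ReflTransGen (PunctAdj C i) x y}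

/-- Apply the permutation `σ` of the alphabet to the `i`-th coordinate. -/
def applyAt {n : ℕ} {F : Type*} [DecidableEq (Fin n)] (i : Fin n) (σ : Equiv.Perm F)
    (x : Fin n → F) : Fin n → F :=
  Function.update x i (σ (x i))

section Aux

variable {n : ℕ} {F : Type*} [DecidableEq F]

/-- Puncture at coordinate `i`. -/
def pct (i : Fin n) (x : Fin n → F) : {j : Fin n // j ≠ i} → F := fun j => x j

lemma ham_split (i : Fin n) (x y : Fin n → F) :
    hammingDist x y = hammingDist (pct i x) (pct i y) + if x i = y i then 0 else 1 := by
  classical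
  have h1 : hammingDist (pct i x) (pct i y)
      = (Finset.univ.filter fun j : Fin n => j ≠ i ∧ x j ≠ y j).card := by
    rw [show hammingDist (pct i x) (pct i y)
        = (Finset.univ.filter fun j : {j : Fin n // j ≠ i} => x ↑j ≠ y ↑j).card from rfl,
      ← Fintype.card_subtype, ← Fintype.card_subtype]
    exact Fintype.card_congr
      (Equiv.subtypeSubtypeEquivSubtypeInter (· ≠ i) (fun j => x j ≠ y j))
  have h2 : (Finset.univ.filter fun j : Fin n => x j ≠ y j)
      = (Finset.univ.filter fun j : Fin n => j ≠ i ∧ x j ≠ y j)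
        ∪ (Finset.univ.filter fun j : Fin n => j = i ∧ x j ≠ y j) := by
    ext j; by_cases hj : j = i <;> simp [hj]
  have hdisj : Disjoint (Finset.univ.filter fun j : Fin n => j ≠ i ∧ x j ≠ y j)
      (Finset.univ.filter fun j : Fin n => j = i ∧ x j ≠ y j) := by
    simp only [Finset.disjoint_left, Finset.mem_filter]
    tauto
  have h3 : (Finset.univ.filter fun j : Fin n => j = i ∧ x j ≠ y j).card
      = if x i = y i then 0 else 1 := by
    by_cases h : x i = y i
    · simp only [h, if_pos, Finset.card_eq_zero]
      rw [Finset.filter_eq_empty_iff]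
      rintro j - ⟨rfl, hne⟩; exact hne h
    · rw [if_neg h, show (Finset.univ.filter fun j : Fin n => j = i ∧ x j ≠ y j) = {i} from ?_,
        Finset.card_singleton]
      ext j; simp only [Finset.mem_filter, Finset.mem_univ, true_and, Finset.mem_singleton]
      constructor
      · rintro ⟨rfl, -⟩; rfl
      · rintro rfl; exact ⟨rfl, h⟩
  rw [show hammingDist x y = (Finset.univ.filter fun j : Fin n => x j ≠ y j).card from rfl,
    h2, Finset.card_union_of_disjoint hdisj, h1, h3]

lemma pct_le_ham (i : Fin n) (x y : Fin n → F) :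
    hammingDist (pct i x) (pct i y) ≤ hammingDist x y := by
  rw [ham_split i x y]; omega

lemma pct_applyAt (i : Fin n) (σ : Equiv.Perm F) (x : Fin n → F) :
    pct i (applyAt i σ x) = pct i x := by
  funext j
  exact Function.update_of_ne j.2 _ _

lemma applyAt_at (i : Fin n) (σ : Equiv.Perm F) (x : Fin n → F) :
    applyAt i σ x i = σ (x i) := Function.update_self _ _ _

lemma applyAt_injective (i : Fin n) (σ : Equiv.Perm F) :
    Function.Injective (applyAt (F := F) i σ) := by
  intro a b h
  funext j
  by_cases hj : j = i
  · subst hj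
    have := congrFun h j
    rw [applyAt_at, applyAt_at] at this
    exact σ.injective this
  · have := congrFun (congrArg (pct i) h) ⟨j, hj⟩
    rwa [pct_applyAt, pct_applyAt] at this

/-- Distance-3 separation of a codeword outside a component from codewords inside. -/
lemma comp_far {C1 : Set (Fin n → F)}
    (hmin : ∀ x ∈ C1, ∀ y ∈ C1, x ≠ y → 3 ≤ hammingDist x y) {i : Fin n}
    {Rs : Set (Fin n → F)} (hRs : IsIComponent C1 i Rs) {x y : Fin n → F}
    (hx : x ∈ C1) (hxR : x ∉ Rs) (hy : y ∈ Rs) :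
    3 ≤ hammingDist (pct i x) (pct i y) := by
  obtain ⟨x0, hx0, rfl⟩ := hRs
  obtain ⟨hyC, hreach⟩ := hy
  by_contra hlt
  push_neg at hlt
  have hne : x ≠ y := by
    rintro rfl
    exact hxR ⟨hyC, hreach⟩
  have h3 := hmin x hx y hyC hne
  rw [ham_split i x y] at h3
  have hD2 : hammingDist (pct i x) (pct i y) = 2 := by
    split at h3 <;> omega
  have hadj : PunctAdj C1 i y x :=
    ⟨hyC, hx, by rw [show hammingDist (fun j : {j : Fin n // j ≠ i} => y ↑j)
      (fun j : {j : Fin n // j ≠ i} => x ↑j) = hammingDist (pct i y) (pct i x) from rfl,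
      hammingDist_comm]; exact hD2⟩
  exact hxR ⟨hx, hreach.tail hadj⟩

lemma comp_subset {C1 : Set (Fin n → F)} {i : Fin n} {Rs : Set (Fin n → F)}
    (hRs : IsIComponent C1 i Rs) : Rs ⊆ C1 := by
  obtain ⟨x0, hx0, rfl⟩ := hRs
  exact fun y hy => hy.1

end Aux

/-- switching a family of pairwise disjoint `i`-components.
If `R_i(1),…,R_i(t)` are pairwise disjoint `i`-components of a `q`-ary
1-perfect code `C1` of length `n` and `σ_1,…,σ_t` are permutations of `F_q`,
then `(C1 \ ∪_s R_i(s)) ∪ (∪_s σ_s(R_i(s)))` is a `q`-ary 1-perfect code. -/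
theorem switching_i_components {n t : ℕ} {F : Type*} [Field F] [Fintype F] [DecidableEq F]
    (C1 : Set (Fin n → F)) (hC1 : IsOnePerfectCode C1) (i : Fin n)
    (R : Fin t → Set (Fin n → F)) (hR : ∀ s, IsIComponent C1 i (R s))
    (hdisj : ∀ s s', s ≠ s' → Disjoint (R s) (R s'))
    (σ : Fin t → Equiv.Perm F) :
    IsOnePerfectCode ((C1 \ ⋃ s, R s) ∪ ⋃ s, applyAt i (σ s) '' R s) := by
  classical
  obtain ⟨hmin, hcard⟩ := hC1
  set U : Set (Fin n → F) := ⋃ s, R s with hU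
  set V : Set (Fin n → F) := ⋃ s, applyAt i (σ s) '' R s with hV
  have hRsub : ∀ s, R s ⊆ C1 := fun s => comp_subset (hR s)
  have hUsub : U ⊆ C1 := Set.iUnion_subset hRsub
  -- cross-component punctured distance
  have hcross : ∀ s s', s ≠ s' → ∀ x ∈ R s, ∀ y ∈ R s',
      3 ≤ hammingDist (pct i x) (pct i y) := by
    intro s s' hss x hx y hy
    exact comp_far hmin (hR s') (hRsub s hx)
      (fun hx' => Set.disjoint_left.mp (hdisj s s' hss) hx hx') hy
  -- minimum distance
  have hmin' : ∀ x ∈ (C1 \ U) ∪ V, ∀ y ∈ (C1 \ U) ∪ V, x ≠ y → 3 ≤ hammingDist x y := by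
    have hdiffV : ∀ x ∈ C1 \ U, ∀ y ∈ V, 3 ≤ hammingDist x y := by
      rintro x ⟨hxC, hxU⟩ y hyV
      obtain ⟨s, y0, hy0, rfl⟩ := by simpa only [hV, Set.mem_iUnion, Set.mem_image] using hyV
      have h3 : 3 ≤ hammingDist (pct i x) (pct i y0) :=
        comp_far hmin (hR s) hxC (fun hxR => hxU (Set.mem_iUnion.mpr ⟨s, hxR⟩)) hy0
      calc 3 ≤ hammingDist (pct i x) (pct i (applyAt i (σ s) y0)) := by
              rwa [pct_applyAt]
        _ ≤ _ := pct_le_ham _ _ _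
    intro x hx y hy hne
    rcases hx with hx | hxV
    · rcases hy with hy | hyV
      · exact hmin x hx.1 y hy.1 hne
      · exact hdiffV x hx y hyV
    · rcases hy with hy | hyV
      · rw [hammingDist_comm]
        exact hdiffV y hy x hxV
      · obtain ⟨s, x0, hx0, rfl⟩ := by simpa only [hV, Set.mem_iUnion, Set.mem_image] using hxV
        obtain ⟨s', y0, hy0, rfl⟩ := by simpa only [hV, Set.mem_iUnion, Set.mem_image] using hyV
        by_cases hss : s = s'
        · subst hss
          have hne0 : x0 ≠ y0 := fun h => hne (by rw [h])
          have h3 := hmin x0 (hRsub s hx0) y0 (hRsub s hy0) hne0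
          rw [ham_split i x0 y0] at h3
          rw [ham_split i (applyAt i (σ s) x0) (applyAt i (σ s) y0), pct_applyAt, pct_applyAt]
          by_cases hD : 3 ≤ hammingDist (pct i x0) (pct i y0)
          · omega
          · have hxi : x0 i ≠ y0 i := by
              intro h; rw [if_pos h] at h3; omega
            have : applyAt i (σ s) x0 i ≠ applyAt i (σ s) y0 i := by
              rw [applyAt_at, applyAt_at]
              exact fun h => hxi ((σ s).injective h)
            rw [if_neg this]
            split at h3 <;> omega
        · have h3 := hcross s s' hss x0 hx0 y0 hy0
          calc 3 ≤ hammingDist (pct i (applyAt i (σ s) x0)) (pct i (applyAt i (σ s') y0)) := by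
                  rwa [pct_applyAt, pct_applyAt]
            _ ≤ _ := pct_le_ham _ _ _
  refine ⟨hmin', ?_⟩
  -- cardinality: the new code has the same size as `C1`
  have hVdisj : Disjoint (C1 \ U) V := by
    rw [Set.disjoint_left]
    rintro z ⟨hzC, hzU⟩ hzV
    obtain ⟨s, y0, hy0, hzy⟩ := by simpa only [hV, Set.mem_iUnion, Set.mem_image] using hzV
    have h3 : 3 ≤ hammingDist (pct i z) (pct i y0) :=
      comp_far hmin (hR s) hzC (fun hzR => hzU (Set.mem_iUnion.mpr ⟨s, hzR⟩)) hy0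
    have h0 : pct i z = pct i y0 := by rw [← hzy, pct_applyAt]
    rw [h0, hammingDist_self] at h3
    omega
  have hginj : ∀ g : (Fin n → F) → (Fin n → F),
      (∀ s, ∀ z ∈ R s, g z = applyAt i (σ s) z) → Set.InjOn g U ∧ g '' U = V := by
    intro g hg
    constructor
    · intro z1 h1 z2 h2 heq
      obtain ⟨s1, hz1⟩ := Set.mem_iUnion.mp h1
      obtain ⟨s2, hz2⟩ := Set.mem_iUnion.mp h2
      rw [hg s1 z1 hz1, hg s2 z2 hz2] at heq
      by_cases hss : s1 = s2
      · subst hss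
        exact applyAt_injective i (σ s1) heq
      · exfalso
        have h3 := hcross s1 s2 hss z1 hz1 z2 hz2
        have h0 : pct i z1 = pct i z2 := by
          rw [← pct_applyAt i (σ s1) z1, heq, pct_applyAt]
        rw [h0, hammingDist_self] at h3
        omega
    · ext z
      simp only [Set.mem_image, hU, hV, Set.mem_iUnion]
      constructor
      · rintro ⟨w, ⟨s, hw⟩, rfl⟩
        exact ⟨s, w, hw, (hg s w hw).symm⟩
      · rintro ⟨s, w, hw, rfl⟩
        exact ⟨w, ⟨s, hw⟩, hg s w hw⟩
  set g : (Fin n → F) → (Fin n → F) :=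
    fun z => if h : ∃ s, z ∈ R s then applyAt i (σ h.choose) z else z with hgdef
  have hg : ∀ s, ∀ z ∈ R s, g z = applyAt i (σ s) z := by
    intro s z hz
    have hex : ∃ s, z ∈ R s := ⟨s, hz⟩
    rw [hgdef]
    simp only [dif_pos hex]
    have hcs : hex.choose = s := by
      by_contra hne
      exact Set.disjoint_left.mp (hdisj hex.choose s hne) hex.choose_spec hz
    rw [hcs]
  obtain ⟨hinj, himg⟩ := hginj g hg
  have hVcard : V.ncard = U.ncard := by
    rw [← himg, Set.ncard_image_of_injOn hinj]
  have hfinU : U.Finite := Set.toFinite _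
  have hfinC1 : C1.Finite := Set.toFinite _
  have hnc : Nat.card ↥((C1 \ U) ∪ V) = Nat.card ↥C1 := by
    rw [Nat.card_coe_set_eq, Nat.card_coe_set_eq,
      Set.ncard_union_eq hVdisj (Set.toFinite _) (Set.toFinite _), hVcard,
      Set.ncard_diff_add_ncard_of_subset hUsub hfinC1]
  rw [hnc]
  exact hcard
end

section
/- Let H_{q,m} be the q-ary Hamming code of length n = (q^m−1)/(q−1), m ≥ 2, with parity-check matrix H = [h_1,...,h_n]. Fix a coordinate i and let l_1,...,l_{(n−1)/q} be the lines of the projective geometry PG_{m−1}(q) through the point i. Then the subspace R_i spanned by all weight-3 codewords (triples) of H_{q,m} with a 1 in coordinate i satisfies R_i = H_{l_1} + H_{l_2} + ... + H_{l_{(n−1)/q}}, and the dimension of R_i over F_q equals q^{m−1} − 1. -/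
set_option linter.unusedSectionVars false


variable {F : Type*} [Field F] [Fintype F] [DecidableEq F] {m n : ℕ}

/-- The linear code with parity-check columns `h`. -/
def parityCheckCode (h : Fin n → Fin m → F) : Submodule F (Fin n → F) where
  carrier := {x | ∑ j, x j • h j = 0}
  add_mem' := by
    intro a b ha hb
    simp only [Set.mem_setOf_eq, Pi.add_apply, add_smul, Finset.sum_add_distrib] at *
    simp [ha, hb]
  zero_mem' := by simp
  smul_mem' := by
    intro c a ha
    simp only [Set.mem_setOf_eq, Pi.smul_apply, smul_eq_mul, mul_smul] at *
    rw [← Finset.smul_sum, ha, smul_zero]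

/-- The submodule of vectors supported inside the coordinate set `l`. -/
def supportedIn (l : Set (Fin n)) : Submodule F (Fin n → F) where
  carrier := {u | ∀ j ∉ l, u j = 0}
  add_mem' := by intro a b ha hb j hj; simp [ha j hj, hb j hj]
  zero_mem' := by intro j hj; simp
  smul_mem' := by intro c a ha j hj; simp [ha j hj]

/-- The principal `i`-component `R_i`: span of all triples (codewords of
weight 3) with a `1` in coordinate `i`. -/
def principalComponent (h : Fin n → Fin m → F) (i : Fin n) : Submodule F (Fin n → F) :=
  Submodule.span F {u | u ∈ parityCheckCode h ∧ hammingNorm u = 3 ∧ u i = 1}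

/-- The line of `PG_{m−1}(q)` through the points `a` and `b`, viewed as a set
of coordinates: `k` is on the line iff `h_k` is in the span of `h_a, h_b`. -/
def lineThrough (h : Fin n → Fin m → F) (a b : Fin n) : Set (Fin n) :=
  {k | h k ∈ Submodule.span F {h a, h b}}

section Aux

variable (h : Fin n → Fin m → F)

lemma mem_code_iff (u : Fin n → F) : u ∈ parityCheckCode h ↔ ∑ j, u j • h j = 0 := Iff.rfl

lemma mem_line_iff (a b k : Fin n) :
    k ∈ lineThrough h a b ↔ ∃ c d : F, c • h a + d • h b = h k := Submodule.mem_span_pair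

lemma base_mem_line (a b : Fin n) : a ∈ lineThrough h a b :=
  (mem_line_iff h a b a).2 ⟨1, 0, by simp⟩

lemma self_mem_line (a b : Fin n) : b ∈ lineThrough h a b :=
  (mem_line_iff h a b b).2 ⟨0, 1, by simp⟩

lemma sum_eq_three {u : Fin n → F} {a b c : Fin n} (hab : a ≠ b) (hac : a ≠ c) (hbc : b ≠ c)
    (hs : ∀ j, j ≠ a → j ≠ b → j ≠ c → u j = 0) :
    ∑ j, u j • h j = u a • h a + u b • h b + u c • h c := by
  rw [← Finset.sum_subset (Finset.subset_univ ({a, b, c} : Finset (Fin n)))]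
  · rw [Finset.sum_insert (by simp [hab, hac]), Finset.sum_insert (by simp [hbc]),
      Finset.sum_singleton, add_assoc]
  · intro j _ hj
    simp only [Finset.mem_insert, Finset.mem_singleton, not_or] at hj
    rw [hs j hj.1 hj.2.1 hj.2.2, zero_smul]

lemma sum_eq_two {u : Fin n → F} {a b : Fin n} (hab : a ≠ b)
    (hs : ∀ j, j ≠ a → j ≠ b → u j = 0) :
    ∑ j, u j • h j = u a • h a + u b • h b := by
  rw [← Finset.sum_subset (Finset.subset_univ ({a, b} : Finset (Fin n)))]
  · rw [Finset.sum_insert (by simp [hab]), Finset.sum_singleton]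
  · intro j _ hj
    simp only [Finset.mem_insert, Finset.mem_singleton, not_or] at hj
    rw [hs j hj.1 hj.2, zero_smul]

variable (hnz : ∀ j, h j ≠ 0) (hnp : ∀ j k, j ≠ k → ∀ c : F, h j ≠ c • h k)

include hnz hnp in
lemma indep2 {a b : Fin n} (hab : a ≠ b) {c d : F} (e : c • h a + d • h b = 0) :
    c = 0 ∧ d = 0 := by
  by_cases hc : c = 0
  · refine ⟨hc, ?_⟩
    subst hc
    simp only [zero_smul, zero_add] at e
    by_contra hd
    exact hnz b (by simpa [hd] using congrArg (fun v => d⁻¹ • v) e)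
  · exfalso
    apply hnp a b hab (-(c⁻¹ * d))
    have e2 : c • h a = -(d • h b) := eq_neg_of_add_eq_zero_left e
    calc h a = c⁻¹ • (c • h a) := by rw [smul_smul, inv_mul_cancel₀ hc, one_smul]
      _ = c⁻¹ • -(d • h b) := by rw [e2]
      _ = (-(c⁻¹ * d)) • h b := by rw [smul_neg, smul_smul, neg_smul]

include hnz hnp in
lemma span_line_eq {i x y : Fin n} (hy : y ≠ i)
    (hmem : h y ∈ Submodule.span F {h i, h x}) :
    Submodule.span F ({h i, h y} : Set (Fin m → F)) = Submodule.span F {h i, h x} := by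
  obtain ⟨c, d, e⟩ := Submodule.mem_span_pair.1 hmem
  have hd : d ≠ 0 := by
    rintro rfl
    simp only [zero_smul, add_zero] at e
    exact hnp y i hy c e.symm
  have hx : h x ∈ Submodule.span F ({h i, h y} : Set (Fin m → F)) := by
    refine Submodule.mem_span_pair.2 ⟨-(d⁻¹ * c), d⁻¹, ?_⟩
    rw [← e, smul_add, smul_smul, smul_smul, inv_mul_cancel₀ hd, one_smul, neg_smul, mul_comm]
    abel
  apply le_antisymm
  · rw [Submodule.span_le]
    rintro z (rfl | rfl)
    · exact Submodule.subset_span (by simp)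
    · exact hmem
  · rw [Submodule.span_le]
    rintro z (rfl | rfl)
    · exact Submodule.subset_span (by simp)
    · exact hx

include hnz hnp in
lemma line_eq {i x y : Fin n} (hy : y ≠ i) (hmem : y ∈ lineThrough h i x) :
    lineThrough h i y = lineThrough h i x := by
  unfold lineThrough
  rw [span_line_eq h hnz hnp hy hmem]

include hnz hnp in
lemma support_pair_zero {u : Fin n → F} (hu : u ∈ parityCheckCode h) {a b : Fin n}
    (hab : a ≠ b) (hs : ∀ j, j ≠ a → j ≠ b → u j = 0) : u = 0 := by
  have e := (mem_code_iff h u).1 hu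
  rw [sum_eq_two h hab hs] at e
  obtain ⟨ha, hb⟩ := indep2 h hnz hnp hab e
  funext j
  by_cases hja : j = a
  · subst hja; exact ha
  by_cases hjb : j = b
  · subst hjb; exact hb
  exact hs j hja hjb

include hnz hnp in
lemma exists_triple {i x y : Fin n} (hx : x ≠ i) (hy : y ≠ i) (hxy : x ≠ y)
    (hcol : y ∈ lineThrough h i x) :
    ∃ u : Fin n → F, u ∈ parityCheckCode h ∧ hammingNorm u = 3 ∧ u i = 1 ∧
      u x ≠ 0 ∧ u y ≠ 0 ∧ ∀ j, j ≠ i → j ≠ x → j ≠ y → u j = 0 := by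
  obtain ⟨c, d, e⟩ := (mem_line_iff h i x y).1 hcol
  have hc : c ≠ 0 := by
    rintro rfl
    simp only [zero_smul, zero_add] at e
    exact hnp y x (Ne.symm hxy) d e.symm
  have hd : d ≠ 0 := by
    rintro rfl
    simp only [zero_smul, add_zero] at e
    exact hnp y i hy c e.symm
  have ha : (c⁻¹ * d) ≠ 0 := by
    simp [hc, hd]
  have hb : (-c⁻¹ : F) ≠ 0 := neg_ne_zero.2 (inv_ne_zero hc)
  have key : (1 : F) • h i + (c⁻¹ * d) • h x + (-c⁻¹) • h y = 0 := by
    have h2 : h i = c⁻¹ • (h y - d • h x) := by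
      have e2 : c • h i = h y - d • h x := by rw [← e]; abel
      rw [← e2, smul_smul, inv_mul_cancel₀ hc, one_smul]
    rw [one_smul, h2, smul_sub, smul_smul, neg_smul]
    abel
  set u : Fin n → F :=
    Pi.single i (1:F) + Pi.single x (c⁻¹ * d) + Pi.single y (-c⁻¹) with hu_def
  have hix : i ≠ x := Ne.symm hx
  have hiy : i ≠ y := Ne.symm hy
  have vi : u i = 1 := by simp [hu_def, Pi.single_apply, hix, hiy]
  have vx : u x = c⁻¹ * d := by simp [hu_def, Pi.single_apply, hx, hxy]
  have vy : u y = -c⁻¹ := by simp [hu_def, Pi.single_apply, hy, Ne.symm hxy]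
  have vz : ∀ j, j ≠ i → j ≠ x → j ≠ y → u j = 0 := by
    intro j hji hjx hjy
    simp [hu_def, Pi.single_apply, hji, hjx, hjy]
  refine ⟨u, ?_, ?_, vi, by rw [vx]; exact ha, by rw [vy]; exact hb, vz⟩
  · rw [mem_code_iff, sum_eq_three h hix hiy hxy vz, vi, vx, vy]
    exact key
  · show (Finset.filter (fun j => u j ≠ 0) Finset.univ).card = 3
    have hsupp : Finset.filter (fun j => u j ≠ 0) Finset.univ = {i, x, y} := by
      ext j
      simp only [Finset.mem_filter, Finset.mem_univ, true_and, Finset.mem_insert,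
        Finset.mem_singleton]
      constructor
      · intro hj
        by_contra hcon
        push_neg at hcon
        exact hj (vz j hcon.1 hcon.2.1 hcon.2.2)
      · rintro (rfl | rfl | rfl)
        · rw [vi]; exact one_ne_zero
        · rw [vx]; exact ha
        · rw [vy]; exact hb
    rw [hsupp]
    exact Finset.card_eq_three.2 ⟨i, x, y, hix, hiy, hxy, rfl⟩

include hnz hnp in
lemma triple_unique {i x y : Fin n} (hix : i ≠ x) (hiy : i ≠ y) (hxy : x ≠ y)
    {u v : Fin n → F} (hu : u ∈ parityCheckCode h) (hv : v ∈ parityCheckCode h)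
    (hsu : ∀ j, j ≠ i → j ≠ x → j ≠ y → u j = 0)
    (hsv : ∀ j, j ≠ i → j ≠ x → j ≠ y → v j = 0)
    (hI : u i = v i) : u = v := by
  have hw : u - v ∈ parityCheckCode h := sub_mem hu hv
  have : u - v = 0 := by
    refine support_pair_zero h hnz hnp hw hxy ?_
    intro j hjx hjy
    by_cases hji : j = i
    · subst hji; simp [hI]
    · simp [hsu j hji hjx hjy, hsv j hji hjx hjy]
  exact sub_eq_zero.1 this

include hnz hnp in
lemma subcode_le_span {i x : Fin n} (hx : x ≠ i) :
    parityCheckCode h ⊓ supportedIn (lineThrough h i x) ≤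
      Submodule.span F {u : Fin n → F |
        u ∈ parityCheckCode h ∧ hammingNorm u = 3 ∧ u i = 1 ∧ u x ≠ 0} := by
  set S : Set (Fin n → F) :=
    {u : Fin n → F | u ∈ parityCheckCode h ∧ hammingNorm u = 3 ∧ u i = 1 ∧ u x ≠ 0} with hS
  suffices H : ∀ N : ℕ, ∀ u : Fin n → F, u ∈ parityCheckCode h →
      (∀ j ∉ lineThrough h i x, u j = 0) →
      ((Finset.univ.filter (fun j => u j ≠ 0)) \ {i, x}).card ≤ N →
      u ∈ Submodule.span F S by
    rintro u ⟨h1, h2⟩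
    exact H _ u h1 h2 le_rfl
  intro N
  induction N with
  | zero =>
    intro u hu hsupp hcard
    have hempty : (Finset.univ.filter (fun j => u j ≠ 0)) \ {i, x} = ∅ :=
      Finset.card_eq_zero.1 (Nat.le_zero.1 hcard)
    have hz : ∀ j, j ≠ i → j ≠ x → u j = 0 := by
      intro j hji hjx
      by_contra hj
      have : j ∈ (Finset.univ.filter (fun j => u j ≠ 0)) \ {i, x} := by
        simp [hj, hji, hjx]
      rw [hempty] at this
      exact absurd this (Finset.notMem_empty j)
    have : u = 0 := support_pair_zero h hnz hnp hu (Ne.symm hx) hz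
    rw [this]
    exact Submodule.zero_mem _
  | succ N ih =>
    intro u hu hsupp hcard
    by_cases hle : ((Finset.univ.filter (fun j => u j ≠ 0)) \ {i, x}).card ≤ N
    · exact ih u hu hsupp hle
    · have hne : ((Finset.univ.filter (fun j => u j ≠ 0)) \ {i, x}).Nonempty := by
        rw [← Finset.card_pos]; omega
      obtain ⟨z, hz⟩ := hne
      simp only [Finset.mem_sdiff, Finset.mem_filter, Finset.mem_univ, true_and,
        Finset.mem_insert, Finset.mem_singleton, not_or] at hz
      obtain ⟨huz, hzi, hzx⟩ := hz
      have hzline : z ∈ lineThrough h i x := by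
        by_contra hcon
        exact huz (hsupp z hcon)
      obtain ⟨t, ht_code, ht_norm, ht_i, ht_x, ht_z, ht_supp⟩ :=
        exists_triple h hnz hnp hx hzi (Ne.symm hzx) hzline
      have htS : t ∈ S := ⟨ht_code, ht_norm, ht_i, ht_x⟩
      set c : F := u z * (t z)⁻¹ with hc
      set u' : Fin n → F := u - c • t with hu'
      have hu'_code : u' ∈ parityCheckCode h := sub_mem hu (Submodule.smul_mem _ _ ht_code)
      have ht_line : ∀ j ∉ lineThrough h i x, t j = 0 := by
        intro j hj
        refine ht_supp j ?_ ?_ ?_ <;> intro hje <;> apply hj <;> rw [hje]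
        · exact base_mem_line h i x
        · exact self_mem_line h i x
        · exact hzline
      have hu'_supp : ∀ j ∉ lineThrough h i x, u' j = 0 := by
        intro j hj
        simp [hu', hsupp j hj, ht_line j hj]
      have hu'z : u' z = 0 := by
        simp only [hu', Pi.sub_apply, Pi.smul_apply, smul_eq_mul, hc]
        field_simp
        simp
      have hu'j : ∀ j, j ∉ ({i, x, z} : Finset (Fin n)) → u' j = u j := by
        intro j hj
        simp only [Finset.mem_insert, Finset.mem_singleton, not_or] at hj
        simp [hu', ht_supp j hj.1 hj.2.1 hj.2.2]
      have hsub : (Finset.univ.filter (fun j => u' j ≠ 0)) \ {i, x} ⊆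
          ((Finset.univ.filter (fun j => u j ≠ 0)) \ {i, x}).erase z := by
        intro j hj
        simp only [Finset.mem_sdiff, Finset.mem_filter, Finset.mem_univ, true_and,
          Finset.mem_insert, Finset.mem_singleton, not_or] at hj
        obtain ⟨hj0, hji, hjx⟩ := hj
        have hjz : j ≠ z := by rintro rfl; exact hj0 hu'z
        rw [Finset.mem_erase]
        refine ⟨hjz, ?_⟩
        simp only [Finset.mem_sdiff, Finset.mem_filter, Finset.mem_univ, true_and,
          Finset.mem_insert, Finset.mem_singleton, not_or]
        refine ⟨?_, hji, hjx⟩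
        rw [← hu'j j (by simp [hji, hjx, hjz])]
        exact hj0
      have hcard' : ((Finset.univ.filter (fun j => u' j ≠ 0)) \ {i, x}).card ≤ N := by
        have h1 := Finset.card_le_card hsub
        have h2 : z ∈ (Finset.univ.filter (fun j => u j ≠ 0)) \ {i, x} := by
          simp [huz, hzi, hzx]
        have h3 := Finset.card_erase_of_mem h2
        omega
      have := ih u' hu'_code hu'_supp hcard'
      have : u = u' + c • t := by simp [hu']
      rw [this]
      exact Submodule.add_mem _ (ih u' hu'_code hu'_supp hcard')
        (Submodule.smul_mem _ _ (Submodule.subset_span htS))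

include hnz hnp in
lemma count_scaled (hcover : ∀ z : Fin m → F, z ≠ 0 → ∃ j, ∃ c : F, z = c • h j)
    (W : Submodule F (Fin m → F)) :
    (Fintype.card F - 1) * Nat.card {j : Fin n // h j ∈ W} + 1 = Nat.card W := by
  classical
  have hbij : Function.Bijective (fun p : Fˣ × {j : Fin n // h j ∈ W} =>
      (⟨⟨(p.1 : F) • h p.2.1, W.smul_mem _ p.2.2⟩, by
        simp only [ne_eq, Submodule.mk_eq_zero]
        exact fun hz => hnz p.2.1 (by
          have := congrArg (fun v => (p.1⁻¹ : F) • v) hz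
          simpa [smul_smul] using this)⟩ :
        {z : W // z ≠ 0})) := by
    constructor
    · rintro ⟨c, j, hj⟩ ⟨c', j', hj'⟩ hpe
      have hpe : (c : F) • h j = (c' : F) • h j' :=
        congrArg (fun t : {z : W // z ≠ 0} => ((t : W) : Fin m → F)) hpe
      have hjj : j = j' := by
        by_contra hne
        exact hnp j j' hne ((c⁻¹ : Fˣ) * c') (by
          have := congrArg (fun v => ((c⁻¹ : Fˣ) : F) • v) hpe
          simpa [smul_smul] using this)
      subst hjj
      have hcc : (c : F) = c' := by
        have hj0 := hnz j
        have : ((c : F) - c') • h j = 0 := by rw [sub_smul, hpe, sub_self]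
        rcases smul_eq_zero.1 this with hc | hc
        · exact sub_eq_zero.1 hc
        · exact absurd hc hj0
      simp [Prod.ext_iff, Units.ext_iff, hcc]
    · rintro ⟨⟨z, hzW⟩, hz0⟩
      simp only [ne_eq, Submodule.mk_eq_zero] at hz0
      obtain ⟨j, c, rfl⟩ := hcover z hz0
      have hc : c ≠ 0 := by rintro rfl; exact hz0 (zero_smul _ _)
      have hjW : h j ∈ W := by
        have := W.smul_mem c⁻¹ hzW
        rwa [smul_smul, inv_mul_cancel₀ hc, one_smul] at this
      exact ⟨⟨Units.mk0 c hc, ⟨j, hjW⟩⟩, rfl⟩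
  have hcard := Nat.card_congr (Equiv.ofBijective _ hbij)
  rw [Nat.card_prod] at hcard
  have hu : Nat.card Fˣ = Fintype.card F - 1 := by
    rw [Nat.card_eq_fintype_card, Fintype.card_units]
  have hsplit : Nat.card {z : W // z = 0} + Nat.card {z : W // ¬ z = 0} = Nat.card W :=
    by rw [← Nat.card_sum]; exact Nat.card_congr (Equiv.sumCompl _)
  have h1 : Nat.card {z : W // z = 0} = 1 := by
    rw [Nat.card_eq_one_iff_unique]
    exact ⟨⟨fun a b => Subtype.ext (a.2.trans b.2.symm)⟩, ⟨⟨0, rfl⟩⟩⟩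
  have heq : Nat.card {z : W // z ≠ 0} = Nat.card {z : W // ¬ z = 0} := rfl
  rw [hu, heq] at hcard
  omega

include hnz hnp in
lemma count_top (hcover : ∀ z : Fin m → F, z ≠ 0 → ∃ j, ∃ c : F, z = c • h j) :
    (Fintype.card F - 1) * n + 1 = Fintype.card F ^ m := by
  classical
  have := count_scaled h hnz hnp hcover ⊤
  have h1 : Nat.card {j : Fin n // h j ∈ (⊤ : Submodule F (Fin m → F))} = n := by
    rw [Nat.card_congr (Equiv.subtypeUnivEquiv (fun j => Submodule.mem_top))]
    simp
  have h2 : Nat.card (⊤ : Submodule F (Fin m → F)) = Fintype.card F ^ m := by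
    rw [Nat.card_congr Submodule.topEquiv.toEquiv, Nat.card_eq_fintype_card,
      Fintype.card_fun, Fintype.card_fin]
  rw [h1, h2] at this
  exact this

include hnz hnp in
lemma finrank_span_pair {a b : Fin n} (hab : a ≠ b) :
    Module.finrank F (Submodule.span F ({h a, h b} : Set (Fin m → F))) = 2 := by
  have hli : LinearIndependent F ![h a, h b] := by
    rw [LinearIndependent.pair_iff]
    intro s t hst
    exact indep2 h hnz hnp hab hst
  have h2 : Set.range ![h a, h b] = {h a, h b} := by
    simp [Matrix.range_cons, Matrix.range_empty, Set.pair_comm]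
  rw [← h2, finrank_span_eq_card hli, Fintype.card_fin]

include hnz hnp in
lemma count_line (hcover : ∀ z : Fin m → F, z ≠ 0 → ∃ j, ∃ c : F, z = c • h j)
    {a b : Fin n} (hab : a ≠ b) :
    (Fintype.card F - 1) *
      Nat.card {j : Fin n // h j ∈ Submodule.span F ({h a, h b} : Set (Fin m → F))} + 1 =
    Fintype.card F ^ 2 := by
  classical
  have := count_scaled h hnz hnp hcover (Submodule.span F ({h a, h b} : Set (Fin m → F)))
  rw [this]
  have : Fintype (Submodule.span F ({h a, h b} : Set (Fin m → F))) := Fintype.ofFinite _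
  rw [Nat.card_eq_fintype_card, Module.card_eq_pow_finrank (K := F), finrank_span_pair h hnz hnp hab]

include hnz hnp in
lemma third_mem {u : Fin n → F} (hu : u ∈ parityCheckCode h) {a b c : Fin n}
    (hab : a ≠ b) (hac : a ≠ c) (hbc : b ≠ c)
    (hsupp : ∀ j, j ≠ a → j ≠ b → j ≠ c → u j = 0) (hc : u c ≠ 0) :
    h c ∈ Submodule.span F ({h a, h b} : Set (Fin m → F)) := by
  have e := (mem_code_iff h u).1 hu
  rw [sum_eq_three h hab hac hbc hsupp] at e
  refine Submodule.mem_span_pair.2 ⟨-((u c)⁻¹ * u a), -((u c)⁻¹ * u b), ?_⟩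
  have e2 : u c • h c = -(u a • h a) - u b • h b := by
    have e4 := eq_neg_of_add_eq_zero_right e
    rw [e4, neg_add]
    abel
  have e3 : h c = (u c)⁻¹ • (u c • h c) := by
    rw [smul_smul, inv_mul_cancel₀ hc, one_smul]
  rw [e3, e2, smul_sub, smul_neg, smul_smul, smul_smul, neg_smul, neg_smul]
  abel

end Aux

lemma nat_card_ne {α : Type*} [Finite α] (a : α) :
    Nat.card {x : α // x ≠ a} + 1 = Nat.card α := by
  classical
  have hcongr := Nat.card_congr (Equiv.sumCompl (fun x : α => x = a))
  rw [Nat.card_sum] at hcongr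
  have h1 : Nat.card {x : α // x = a} = 1 := by
    rw [Nat.card_eq_one_iff_unique]
    exact ⟨⟨fun u v => Subtype.ext (u.2.trans v.2.symm)⟩, ⟨⟨a, rfl⟩⟩⟩
  have heq : Nat.card {x : α // x ≠ a} = Nat.card {x : α // ¬ x = a} := rfl
  omega

lemma three_support1 {u : Fin n → F} (h3 : hammingNorm u = 3) {a : Fin n} (ha : u a ≠ 0) :
    ∃ y z, y ≠ a ∧ z ≠ a ∧ y ≠ z ∧ u y ≠ 0 ∧ u z ≠ 0 ∧
      ∀ j, j ≠ a → j ≠ y → j ≠ z → u j = 0 := by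
  set s := Finset.univ.filter (fun j => u j ≠ 0) with hs
  have hmem : ∀ j, j ∈ s ↔ u j ≠ 0 := by intro j; simp [hs]
  have has : a ∈ s := (hmem a).2 ha
  have hcard : s.card = 3 := h3
  have hcard2 : (s.erase a).card = 2 := by
    rw [Finset.card_erase_of_mem has, hcard]
  obtain ⟨y, z, hyz, hep⟩ := Finset.card_eq_two.1 hcard2
  have hy : y ∈ s.erase a := by rw [hep]; simp
  have hz : z ∈ s.erase a := by rw [hep]; simp
  rw [Finset.mem_erase] at hy hz
  refine ⟨y, z, hy.1, hz.1, hyz, (hmem y).1 hy.2, (hmem z).1 hz.2, ?_⟩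
  intro j hja hjy hjz
  by_contra hj
  have : j ∈ s.erase a := Finset.mem_erase.2 ⟨hja, (hmem j).2 hj⟩
  rw [hep] at this
  simp only [Finset.mem_insert, Finset.mem_singleton] at this
  tauto

lemma three_support2 {u : Fin n → F} (h3 : hammingNorm u = 3) {a b : Fin n} (hab : a ≠ b)
    (ha : u a ≠ 0) (hb : u b ≠ 0) :
    ∃ z, z ≠ a ∧ z ≠ b ∧ u z ≠ 0 ∧ ∀ j, j ≠ a → j ≠ b → j ≠ z → u j = 0 := by
  set s := Finset.univ.filter (fun j => u j ≠ 0) with hs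
  have hmem : ∀ j, j ∈ s ↔ u j ≠ 0 := by intro j; simp [hs]
  have has : a ∈ s := (hmem a).2 ha
  have hbs : b ∈ (s.erase a) := Finset.mem_erase.2 ⟨Ne.symm hab, (hmem b).2 hb⟩
  have hcard : s.card = 3 := h3
  have hcard1 : ((s.erase a).erase b).card = 1 := by
    rw [Finset.card_erase_of_mem hbs, Finset.card_erase_of_mem has, hcard]
  obtain ⟨z, hz⟩ := Finset.card_eq_one.1 hcard1
  have hzm : z ∈ (s.erase a).erase b := by rw [hz]; simp
  rw [Finset.mem_erase, Finset.mem_erase] at hzm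
  refine ⟨z, hzm.2.1, hzm.1, (hmem z).1 hzm.2.2, ?_⟩
  intro j hja hjb hjz
  by_contra hj
  have : j ∈ (s.erase a).erase b :=
    Finset.mem_erase.2 ⟨hjb, Finset.mem_erase.2 ⟨hja, (hmem j).2 hj⟩⟩
  rw [hz] at this
  simp only [Finset.mem_singleton] at this
  exact hjz this


set_option maxHeartbeats 1000000 in
/-- `R_i` equals the sum of the subcodes `H_l` over the pencil of
lines `l` through the point `i`, and `dim R_i = q^{m−1} − 1`.  (The pencil of
lines through `i` is exactly `{l_{ix} : x ≠ i}`.) -/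
theorem principal_component_eq_sum_of_lines
    (h : Fin n → Fin m → F) (hm : 2 ≤ m)
    (hn : n = (Fintype.card F ^ m - 1) / (Fintype.card F - 1))
    (hnz : ∀ j, h j ≠ 0)
    (hnp : ∀ j k, j ≠ k → ∀ c : F, h j ≠ c • h k)
    (hcover : ∀ z : Fin m → F, z ≠ 0 → ∃ j, ∃ c : F, z = c • h j)
    (i : Fin n) :
    principalComponent h i =
      (⨆ x : {x : Fin n // x ≠ i},
        parityCheckCode h ⊓ supportedIn (lineThrough h i x)) ∧
    Module.finrank F (principalComponent h i) =
      Fintype.card F ^ (m - 1) - 1 := by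
  classical
  set q : ℕ := Fintype.card F with hqdef
  have hq2 : 2 ≤ q := Fintype.one_lt_card
  set P := {x : Fin n // x ≠ i} with hP
  set f : P → Submodule F (Fin m → F) :=
    (fun x => Submodule.span F ({h i, h x.1} : Set (Fin m → F))) with hf
  have line_of_f : ∀ x y : P, f x = f y → lineThrough h i x.1 = lineThrough h i y.1 := by
    intro x y hxy
    show {k | h k ∈ f x} = {k | h k ∈ f y}
    rw [hxy]
  have hrepex : ∀ c : Set.range f, ∃ x : P, f x = c.1 := fun c => c.2
  choose rep hrep using hrepex
  set g : P → P := (fun x => rep ⟨f x, ⟨x, rfl⟩⟩) with hg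
  have hgf : ∀ x, f (g x) = f x := fun x => hrep ⟨f x, ⟨x, rfl⟩⟩
  have hgg : ∀ x, g (g x) = g x := by
    intro x
    have h1 : (⟨f (g x), ⟨g x, rfl⟩⟩ : Set.range f) = ⟨f x, ⟨x, rfl⟩⟩ :=
      Subtype.ext (hgf x)
    calc g (g x) = rep ⟨f (g x), ⟨g x, rfl⟩⟩ := by simp only [hg]
      _ = rep ⟨f x, ⟨x, rfl⟩⟩ := by rw [h1]
      _ = g x := by simp only [hg]
  have hmem_x_line : ∀ x : P, x.1 ∈ lineThrough h i (g x).1 := by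
    intro x
    show h x.1 ∈ Submodule.span F ({h i, h (g x).1} : Set (Fin m → F))
    have : Submodule.span F ({h i, h (g x).1} : Set (Fin m → F)) = f x := hgf x
    rw [this]
    exact Submodule.subset_span (by simp)
  -- the basis triples
  set B := {x : P // g x ≠ x} with hB
  have hBne : ∀ x : B, (g x.1).1 ≠ x.1.1 := by
    intro x e
    exact x.2 (Subtype.ext e)
  have btrip : ∀ x : B, ∃ u : Fin n → F, u ∈ parityCheckCode h ∧ hammingNorm u = 3 ∧
      u i = 1 ∧ u (g x.1).1 ≠ 0 ∧ u x.1.1 ≠ 0 ∧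
      ∀ j, j ≠ i → j ≠ (g x.1).1 → j ≠ x.1.1 → u j = 0 :=
    fun x => exists_triple h hnz hnp (g x.1).2 x.1.2 (hBne x) (hmem_x_line x.1)
  choose b hb_code hb_norm hb_i hb_gx hb_x hb_supp using btrip
  -- Step A : span of the b's is inside R_i
  have span_b_le : Submodule.span F (Set.range b) ≤ principalComponent h i := by
    rw [Submodule.span_le]
    rintro _ ⟨x, rfl⟩
    exact Submodule.subset_span ⟨hb_code x, hb_norm x, hb_i x⟩
  -- Step B : the sup of line subcodes is inside the span of the b's
  have sup_le_span_b : (⨆ x : {x : Fin n // x ≠ i},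
      parityCheckCode h ⊓ supportedIn (lineThrough h i x.1)) ≤
      Submodule.span F (Set.range b) := by
    apply iSup_le
    intro x
    have hline : lineThrough h i x.1 = lineThrough h i (g x).1 :=
      line_of_f x (g x) (hgf x).symm
    rw [hline]
    refine le_trans (subcode_le_span h hnz hnp (g x).2) ?_
    rw [Submodule.span_le]
    rintro u ⟨hu_code, hu_norm, hu_i, hu_r⟩
    have hir : i ≠ (g x).1 := Ne.symm (g x).2
    have hui : u i ≠ 0 := by rw [hu_i]; exact one_ne_zero
    obtain ⟨z, hzi, hzr, huz, husupp⟩ := three_support2 hu_norm hir hui hu_r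
    have hz_mem : h z ∈ Submodule.span F ({h i, h (g x).1} : Set (Fin m → F)) :=
      third_mem h hnz hnp hu_code hir (Ne.symm hzi) (Ne.symm hzr) husupp huz
    set Z : P := (⟨z, hzi⟩ : P) with hZ
    have hfZ : f Z = f (g x) := span_line_eq h hnz hnp hzi hz_mem
    have hfZx : f Z = f x := hfZ.trans (hgf x)
    have hgZ : g Z = g x := by
      have h1 : (⟨f Z, ⟨Z, rfl⟩⟩ : Set.range f) = ⟨f x, ⟨x, rfl⟩⟩ := Subtype.ext hfZx
      calc g Z = rep ⟨f Z, ⟨Z, rfl⟩⟩ := by simp only [hg]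
        _ = rep ⟨f x, ⟨x, rfl⟩⟩ := by rw [h1]
        _ = g x := by simp only [hg]
    have hZB : g Z ≠ Z := by
      rw [hgZ]
      intro e
      exact hzr (congrArg Subtype.val e).symm
    have hueq : u = b ⟨Z, hZB⟩ := by
      refine triple_unique h hnz hnp hir (Ne.symm hzi) (Ne.symm hzr) hu_code
        (hb_code ⟨Z, hZB⟩) husupp ?_ ?_
      · intro j hji hjr hjz
        refine hb_supp ⟨Z, hZB⟩ j hji ?_ hjz
        rw [hgZ]
        exact hjr
      · rw [hu_i, hb_i]
    rw [hueq]
    exact Submodule.subset_span ⟨⟨Z, hZB⟩, rfl⟩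
  -- Step C : R_i is inside the sup
  have ri_le_sup : principalComponent h i ≤ (⨆ x : {x : Fin n // x ≠ i},
      parityCheckCode h ⊓ supportedIn (lineThrough h i x.1)) := by
    rw [principalComponent, Submodule.span_le]
    rintro u ⟨hu_code, hu_norm, hu_i⟩
    have hui : u i ≠ 0 := by rw [hu_i]; exact one_ne_zero
    obtain ⟨y, z, hyi, hzi, hyz, huy, huz, hsupp⟩ := three_support1 hu_norm hui
    have hz_mem : h z ∈ Submodule.span F ({h i, h y} : Set (Fin m → F)) :=
      third_mem h hnz hnp hu_code (Ne.symm hyi) (Ne.symm hzi) hyz hsupp huz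
    have hmem2 : u ∈ parityCheckCode h ⊓ supportedIn (lineThrough h i y) := by
      refine ⟨hu_code, ?_⟩
      intro j hj
      refine hsupp j ?_ ?_ ?_ <;> intro hje <;> apply hj <;> rw [hje]
      · exact base_mem_line h i y
      · exact self_mem_line h i y
      · exact hz_mem
    exact le_iSup (fun x : {x : Fin n // x ≠ i} =>
      parityCheckCode h ⊓ supportedIn (lineThrough h i x.1)) ⟨y, hyi⟩ hmem2
  have part1 : principalComponent h i = (⨆ x : {x : Fin n // x ≠ i},
      parityCheckCode h ⊓ supportedIn (lineThrough h i x.1)) :=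
    le_antisymm ri_le_sup (le_trans sup_le_span_b span_b_le)
  refine ⟨part1, ?_⟩
  -- Part 2 : the dimension count
  have hspan_eq : principalComponent h i = Submodule.span F (Set.range b) :=
    le_antisymm (le_trans (le_of_eq part1) sup_le_span_b) span_b_le
  haveI : Fintype B := Fintype.ofFinite _
  have hli : LinearIndependent F b := by
    rw [Fintype.linearIndependent_iff]
    intro g0 hg0 x0
    have hev : ∑ x : B, g0 x * b x x0.1.1 = 0 := by
      have := congrFun hg0 x0.1.1
      simpa [Finset.sum_apply] using this
    rw [Finset.sum_eq_single x0] at hev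
    · rcases mul_eq_zero.1 hev with h1 | h2
      · exact h1
      · exact absurd h2 (hb_x x0)
    · intro x _ hx
      have hzero : b x x0.1.1 = 0 := by
        refine hb_supp x x0.1.1 x0.1.2 ?_ ?_
        · intro e
          have e1 : x0.1 = g x.1 := Subtype.ext e
          apply x0.2
          rw [e1, hgg]
        · intro e
          exact hx (Subtype.ext (Subtype.ext e)).symm
      rw [hzero, mul_zero]
    · intro hx0
      exact absurd (Finset.mem_univ x0) hx0
  rw [hspan_eq, finrank_span_eq_card hli]
  -- counting
  set L := Nat.card (Set.range f) with hL
  have hKline : ∀ K : ℕ, (q - 1) * K + 1 = q ^ 2 → K = q + 1 := by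
    intro K hK
    obtain ⟨q', hq'⟩ := Nat.exists_eq_add_of_le hq2
    have hsub : q - 1 = q' + 1 := by omega
    rw [hsub] at hK
    rw [hq'] at hK ⊢
    have hexp : (2 + q') ^ 2 = (q' + 1) * (2 + q' + 1) + 1 := by ring
    rw [hexp] at hK
    have := Nat.eq_of_mul_eq_mul_left (show 0 < q' + 1 by omega) (by omega : (q'+1) * K = (q'+1) * (2 + q' + 1))
    omega
  have hi_mem : ∀ c : Set.range f, h i ∈ c.1 := by
    intro c
    rw [← hrep c]
    exact Submodule.subset_span (by simp)
  have hfiber : ∀ c : Set.range f,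
      Nat.card {x : P // (⟨f x, ⟨x, rfl⟩⟩ : Set.range f) = c} = q := by
    intro c
    have hKc : (q - 1) * Nat.card {j : Fin n // h j ∈ f (rep c)} + 1 = q ^ 2 :=
      count_line h hnz hnp hcover (Ne.symm (rep c).2)
    rw [hrep c] at hKc
    have hK : Nat.card {j : Fin n // h j ∈ c.1} = q + 1 := hKline _ hKc
    have e1 : {x : P // (⟨f x, ⟨x, rfl⟩⟩ : Set.range f) = c} ≃
        {y : {j : Fin n // h j ∈ c.1} // y ≠ ⟨i, hi_mem c⟩} := by
      refine ⟨fun x => ⟨⟨x.1.1, ?_⟩, ?_⟩, fun y => ⟨⟨y.1.1, fun e => y.2 (Subtype.ext e)⟩, ?_⟩,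
        fun x => Subtype.ext (Subtype.ext rfl), fun y => Subtype.ext (Subtype.ext rfl)⟩
      · have : f x.1 = c.1 := congrArg Subtype.val x.2
        rw [← this]
        exact Submodule.subset_span (by simp)
      · intro e
        exact x.1.2 (congrArg Subtype.val e)
      · apply Subtype.ext
        show f _ = c.1
        have hyne : y.1.1 ≠ i := fun e => y.2 (Subtype.ext e)
        have hymem : h y.1.1 ∈ f (rep c) := by
          rw [hrep c]; exact y.1.2
        have := span_line_eq h hnz hnp hyne hymem
        show Submodule.span F ({h i, h y.1.1} : Set (Fin m → F)) = c.1
        exact this.trans (hrep c)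
    rw [Nat.card_congr e1]
    have := nat_card_ne (⟨i, hi_mem c⟩ : {j : Fin n // h j ∈ c.1})
    omega
  -- total count of P
  haveI : Fintype (Set.range f) := Fintype.ofFinite _
  haveI : ∀ c : Set.range f, Fintype {x : P // (⟨f x, ⟨x, rfl⟩⟩ : Set.range f) = c} :=
    fun c => Fintype.ofFinite _
  have hPcount : Nat.card P = L * q := by
    have e2 := Equiv.sigmaFiberEquiv (fun x : P => (⟨f x, ⟨x, rfl⟩⟩ : Set.range f))
    rw [← Nat.card_congr e2, Nat.card_eq_fintype_card, Fintype.card_sigma]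
    have : ∀ c : Set.range f,
        Fintype.card {x : P // (⟨f x, ⟨x, rfl⟩⟩ : Set.range f) = c} = q := by
      intro c
      rw [← Nat.card_eq_fintype_card]
      exact hfiber c
    rw [Finset.sum_congr rfl (fun c _ => this c), Finset.sum_const, smul_eq_mul]
    rw [hL, Nat.card_eq_fintype_card]
    rfl
  have hPn : Nat.card P + 1 = n := by
    have := nat_card_ne i
    rwa [Nat.card_eq_fintype_card (α := Fin n), Fintype.card_fin] at this
  -- fixed points of g correspond to lines
  have hfixcard : Nat.card {x : P // g x = x} = L := by
    refine Nat.card_congr ⟨fun x => ⟨f x.1, ⟨x.1, rfl⟩⟩, fun c => ⟨rep c, ?_⟩, ?_, ?_⟩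
    · have h1 : (⟨f (rep c), ⟨rep c, rfl⟩⟩ : Set.range f) = c := Subtype.ext (hrep c)
      calc g (rep c) = rep ⟨f (rep c), ⟨rep c, rfl⟩⟩ := by simp only [hg]
        _ = rep c := by rw [h1]
    · intro x
      apply Subtype.ext
      calc rep ⟨f x.1, ⟨x.1, rfl⟩⟩ = g x.1 := by simp only [hg]
        _ = x.1 := x.2
    · intro c
      exact Subtype.ext (hrep c)
  have hBcard : Nat.card B + L = Nat.card P := by
    have hcongr := Nat.card_congr (Equiv.sumCompl (fun x : P => g x = x))
    rw [Nat.card_sum] at hcongr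
    have heq : Nat.card B = Nat.card {x : P // ¬ g x = x} := rfl
    omega
  -- final arithmetic
  have htop := count_top h hnz hnp hcover
  rw [← Nat.card_eq_fintype_card]
  obtain ⟨q', hq'⟩ := Nat.exists_eq_add_of_le hq2
  have hsub : q - 1 = q' + 1 := by omega
  rw [hsub] at htop
  have hm1 : m - 1 + 1 = m := by omega
  have hpow : q ^ m = q ^ (m - 1) * q := by rw [← pow_succ, hm1]
  set Q1 := q ^ (m - 1) with hQ1
  rw [hpow] at htop
  -- htop : (q' + 1) * n + 1 = Q1 * q
  have hn' : n = L * q + 1 := by omega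
  rw [hn', hq'] at htop
  have hkey : (q' + 1) * (L * (2 + q') + 1) + 1 = ((q' + 1) * L + 1) * (2 + q') := by ring
  rw [hkey] at htop
  have hcancel : (q' + 1) * L + 1 = Q1 :=
    Nat.eq_of_mul_eq_mul_right (show 0 < 2 + q' by omega) htop
  have hLq : L * (2 + q') = L * (q' + 1) + L := by ring
  have hBL : Nat.card B = L * (q' + 1) := by
    rw [hq'] at hPcount
    omega
  rw [hBL, mul_comm]
  omega
end

section
/- Let H_{q,m} be the q-ary Hamming code of length n = (q^m−1)/(q−1), let x ∈ F_q^n be such that supp(x) is an (m−2)-dimensional projective hyperplane in PG_{m−1}(q), let i be a coordinate with i ∉ supp(x), and let R_i be the subspace of H_{q,m} spanned by all weight-3 codewords with a 1 in coordinate i. Then for every u ∈ F_q^n with supp(u) ⊆ supp(x), the coset R_i + u intersects the set {v ∈ F_q^n : supp(v) ⊆ supp(x)} in exactly one vector, namely u; equivalently, R_i ∩ {v : supp(v) ⊆ supp(x)} = {0}. -/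
variable {F : Type*} [Field F] [Fintype F] [DecidableEq F] {m n : ℕ}

open Classical in
/-- Key algebraic lemma: an element of `R_i` supported inside a hyperplane
not containing the point `i` must be zero. -/
theorem principal_supported_eq_zero
    (h : Fin n → Fin m → F)
    (hnz : ∀ j, h j ≠ 0)
    (hnp : ∀ j k, j ≠ k → ∀ c : F, h j ≠ c • h k)
    (φ : (Fin m → F) →ₗ[F] F) (i : Fin n) (hφi : φ (h i) ≠ 0)
    (r : Fin n → F) (hr : r ∈ principalComponent h i)
    (hsupp : ∀ j, r j ≠ 0 → φ (h j) = 0) : r = 0 := by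
  by_contra hne
  obtain ⟨k₀, hk₀⟩ := Function.ne_iff.mp hne
  simp only [Pi.zero_apply] at hk₀
  have hφk₀ : φ (h k₀) = 0 := hsupp _ hk₀
  have hk₀i : k₀ ≠ i := fun e => hφi (e ▸ hφk₀)
  -- the line through i and k₀, with i removed
  set S : Finset (Fin n) :=
    Finset.univ.filter (fun k => k ≠ i ∧ h k ∈ Submodule.span F {h i, h k₀}) with hS
  have hmemS : ∀ k, k ∈ S ↔ k ≠ i ∧ h k ∈ Submodule.span F {h i, h k₀} := by
    intro k; simp [hS]
  -- the linear map summing over the line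
  let L : (Fin n → F) →ₗ[F] (Fin m → F) :=
    { toFun := fun v => ∑ k ∈ S, v k • h k
      map_add' := by intro a b; simp [add_smul, Finset.sum_add_distrib]
      map_smul' := by intro c a; simp [smul_smul, Finset.smul_sum] }
  -- every generator of R_i is mapped into span {h i}
  have hgen : principalComponent h i ≤
      Submodule.comap L (Submodule.span F {h i}) := by
    rw [principalComponent, Submodule.span_le]
    rintro w ⟨hw1, hw2, hw3⟩
    have hwi : i ∈ Finset.univ.filter (fun j => w j ≠ 0) := by
      simp [hw3]
    have hcard : (Finset.univ.filter (fun j => w j ≠ 0)).card = 3 := hw2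
    have hcard2 : ((Finset.univ.filter (fun j => w j ≠ 0)).erase i).card = 2 := by
      rw [Finset.card_erase_of_mem hwi, hcard]
    obtain ⟨a', b', hab, habs⟩ := Finset.card_eq_two.mp hcard2
    have ha'mem := habs ▸ Finset.mem_insert_self a' {b'}
    have hb'mem : b' ∈ (Finset.univ.filter (fun j => w j ≠ 0)).erase i := by
      rw [habs]; simp
    have ha'i : a' ≠ i := (Finset.mem_erase.mp ha'mem).1
    have hb'i : b' ≠ i := (Finset.mem_erase.mp hb'mem).1
    have hwa' : w a' ≠ 0 := by
      have := (Finset.mem_erase.mp ha'mem).2; simpa using this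
    have hwb' : w b' ≠ 0 := by
      have := (Finset.mem_erase.mp hb'mem).2; simpa using this
    -- the codeword equation restricted to the support
    have hTsum : ∑ j, w j • h j =
        w i • h i + (w a' • h a' + w b' • h b') := by
      rw [← Finset.sum_subset
        (Finset.subset_univ (insert i ({a', b'} : Finset (Fin n))))
        (by intro j _ hj
            have : w j = 0 := by
              by_contra hwj
              apply hj
              rcases eq_or_ne j i with rfl | hji
              · exact Finset.mem_insert_self _ _
              · apply Finset.mem_insert_of_mem
                have : j ∈ (Finset.univ.filter (fun j => w j ≠ 0)).erase i :=
                  Finset.mem_erase.mpr ⟨hji, by simp [hwj]⟩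
                rwa [habs] at this
            simp [this])]
      rw [Finset.sum_insert (by simp [Ne.symm ha'i, Ne.symm hb'i]),
        Finset.sum_pair hab]
    have keq : h i + (w a' • h a' + w b' • h b') = 0 := by
      have := hw1
      simp only [parityCheckCode, Submodule.mem_mk, AddSubmonoid.mem_mk,
        AddSubsemigroup.mem_mk, Set.mem_setOf_eq] at this
      rw [hTsum, hw3, one_smul] at this
      exact this
    -- reduce the sum over S to the contributions of a' and b'
    have hsum : ∑ k ∈ S, w k • h k = ∑ k ∈ S ∩ {a', b'}, w k • h k := by
      refine (Finset.sum_subset Finset.inter_subset_left ?_).symm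
      intro k hkS hk
      have hki : k ≠ i := ((hmemS k).mp hkS).1
      have : w k = 0 := by
        by_contra hwk
        apply hk
        refine Finset.mem_inter.mpr ⟨hkS, ?_⟩
        have : k ∈ (Finset.univ.filter (fun j => w j ≠ 0)).erase i :=
          Finset.mem_erase.mpr ⟨hki, by simp [hwk]⟩
        rwa [habs] at this
      simp [this]
    -- membership goal
    show ∑ k ∈ S, w k • h k ∈ Submodule.span F {h i}
    rw [hsum]
    by_cases ha'S : a' ∈ S <;> by_cases hb'S : b' ∈ S
    · -- both on the line
      have : S ∩ {a', b'} = {a', b'} := by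
        apply Finset.inter_eq_right.mpr
        intro k hk
        rcases Finset.mem_insert.mp hk with rfl | hk
        · exact ha'S
        · rwa [Finset.mem_singleton.mp hk]
      rw [this, Finset.sum_pair hab]
      have : w a' • h a' + w b' • h b' = -h i :=
        (neg_eq_of_add_eq_zero_right keq).symm
      rw [this]
      exact Submodule.neg_mem _ (Submodule.subset_span rfl)
    · -- a' on the line, b' not : impossible
      exfalso; apply hb'S
      refine (hmemS b').mpr ⟨hb'i, ?_⟩
      have ha'span : h a' ∈ Submodule.span F {h i, h k₀} := ((hmemS a').mp ha'S).2
      have : w b' • h b' ∈ Submodule.span F {h i, h k₀} := by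
        have e : w b' • h b' = -h i - w a' • h a' := by
          have h2 : (h i + w a' • h a') + w b' • h b' = 0 := by
            rw [← keq]; abel
          rw [← neg_eq_of_add_eq_zero_right h2]; abel
        rw [e]
        exact Submodule.sub_mem _
          (Submodule.neg_mem _ (Submodule.subset_span (Set.mem_insert _ _)))
          (Submodule.smul_mem _ _ ha'span)
      have := Submodule.smul_mem _ (w b')⁻¹ this
      rwa [smul_smul, inv_mul_cancel₀ hwb', one_smul] at this
    · -- b' on the line, a' not : impossible
      exfalso; apply ha'S
      refine (hmemS a').mpr ⟨ha'i, ?_⟩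
      have hb'span : h b' ∈ Submodule.span F {h i, h k₀} := ((hmemS b').mp hb'S).2
      have : w a' • h a' ∈ Submodule.span F {h i, h k₀} := by
        have e : w a' • h a' = -h i - w b' • h b' := by
          have h2 : (h i + w b' • h b') + w a' • h a' = 0 := by
            rw [← keq]; abel
          rw [← neg_eq_of_add_eq_zero_right h2]; abel
        rw [e]
        exact Submodule.sub_mem _
          (Submodule.neg_mem _ (Submodule.subset_span (Set.mem_insert _ _)))
          (Submodule.smul_mem _ _ hb'span)
      have := Submodule.smul_mem _ (w a')⁻¹ this
      rwa [smul_smul, inv_mul_cancel₀ hwa', one_smul] at this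
    · -- neither on the line
      have : S ∩ {a', b'} = ∅ := by
        ext k
        simp only [Finset.mem_inter, Finset.mem_insert, Finset.mem_singleton,
          Finset.notMem_empty, iff_false]
        rintro ⟨hkS, rfl | rfl⟩
        exacts [ha'S hkS, hb'S hkS]
      rw [this, Finset.sum_empty]
      exact Submodule.zero_mem _
  -- now apply to r
  have hLr : L r ∈ Submodule.span F {h i} := hgen hr
  obtain ⟨c, hc⟩ := Submodule.mem_span_singleton.mp hLr
  have hφLr : φ (L r) = 0 := by
    show φ (∑ k ∈ S, r k • h k) = 0
    rw [map_sum]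
    apply Finset.sum_eq_zero
    intro k _
    rcases eq_or_ne (r k) 0 with e | e
    · simp [e]
    · simp [map_smul, hsupp k e]
  have hc0 : c = 0 := by
    have : c * φ (h i) = 0 := by
      have := hφLr
      rw [← hc] at this
      simpa using this
    exact (mul_eq_zero.mp this).resolve_right hφi
  have hLr0 : (∑ k ∈ S, r k • h k) = 0 := by
    have : L r = 0 := by rw [← hc, hc0, zero_smul]
    exact this
  have hsingle : ∑ k ∈ S, r k • h k = r k₀ • h k₀ := by
    apply Finset.sum_eq_single k₀
    · intro k hkS hkk₀
      have hki := ((hmemS k).mp hkS).1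
      have hkspan := ((hmemS k).mp hkS).2
      rcases eq_or_ne (r k) 0 with e | e
      · simp [e]
      · exfalso
        obtain ⟨α, β, hαβ⟩ := Submodule.mem_span_pair.mp hkspan
        have hφk : φ (h k) = 0 := hsupp k e
        have hα : α = 0 := by
          have : α * φ (h i) + β * φ (h k₀) = 0 := by
            rw [← hφk, ← hαβ]; simp
          rw [hφk₀, mul_zero, add_zero] at this
          exact (mul_eq_zero.mp this).resolve_right hφi
        rw [hα, zero_smul, zero_add] at hαβ
        exact hnp k k₀ hkk₀ β hαβ.symm
    · intro hk
      exfalso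
      exact hk ((hmemS k₀).mpr ⟨hk₀i, Submodule.subset_span (by simp)⟩)
  rw [hsingle] at hLr0
  rcases smul_eq_zero.mp hLr0 with e | e
  · exact hk₀ e
  · exact hnz k₀ e

/-- Lemma 1: if `supp(x)` is an `(m−2)`-dimensional projective
hyperplane of `PG_{m−1}(q)` and `i ∉ supp(x)`, then for every `u` supported in
`supp(x)` the coset `R_i + u` meets `{v : supp(v) ⊆ supp(x)}` exactly in `{u}`;
equivalently `R_i ∩ {v : supp(v) ⊆ supp(x)} = {0}`. -/
theorem coset_meets_hyperplane_once
    (h : Fin n → Fin m → F) (hm : 2 ≤ m)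
    (hn : n = (Fintype.card F ^ m - 1) / (Fintype.card F - 1))
    (hnz : ∀ j, h j ≠ 0)
    (hnp : ∀ j k, j ≠ k → ∀ c : F, h j ≠ c • h k)
    (hcover : ∀ z : Fin m → F, z ≠ 0 → ∃ j, ∃ c : F, z = c • h j)
    (x : Fin n → F)
    (φ : (Fin m → F) →ₗ[F] F) (hφ : φ ≠ 0)
    (hhyp : ∀ j, x j ≠ 0 ↔ φ (h j) = 0)
    (i : Fin n) (hi : x i = 0) :
    (∀ u : Fin n → F, (∀ j, u j ≠ 0 → x j ≠ 0) →
      {w | ∃ r ∈ principalComponent h i, w = r + u} ∩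
        {v : Fin n → F | ∀ j, v j ≠ 0 → x j ≠ 0} = {u}) ∧
    (principalComponent h i : Set (Fin n → F)) ∩
      {v : Fin n → F | ∀ j, v j ≠ 0 → x j ≠ 0} = {0} := by
  
  have hφi : φ (h i) ≠ 0 := by
    intro e
    have := (hhyp i).mpr e
    exact this hi
  have key : ∀ r : Fin n → F, r ∈ principalComponent h i →
      (∀ j, r j ≠ 0 → x j ≠ 0) → r = 0 := by
    intro r hr hs
    exact principal_supported_eq_zero h hnz hnp φ i hφi r hr
      (fun j hj => (hhyp j).mp (hs j hj))
  constructor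
  · intro u hu
    ext w
    simp only [Set.mem_inter_iff, Set.mem_setOf_eq, Set.mem_singleton_iff]
    constructor
    · rintro ⟨⟨r, hr, rfl⟩, hw⟩
      have hr0 : r = 0 := by
        apply key r hr
        intro j hj
        rcases eq_or_ne (u j) 0 with e | e
        · apply hw j
          simp only [Pi.add_apply, e, add_zero]
          exact hj
        · exact hu j e
      rw [hr0, zero_add]
    · rintro rfl
      exact ⟨⟨0, Submodule.zero_mem _, by rw [zero_add]⟩, hu⟩
  · ext v
    simp only [Set.mem_inter_iff, SetLike.mem_coe, Set.mem_setOf_eq,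
      Set.mem_singleton_iff]
    constructor
    · rintro ⟨hv1, hv2⟩
      exact key v hv1 hv2
    · rintro rfl
      exact ⟨Submodule.zero_mem _, by simp⟩
end

section
/- Let R_i be the subspace of the q-ary Hamming code H_{q,m} spanned by all weight-3 codewords with a 1 in coordinate i, and suppose u = (u_1,...,u_n) ∈ R_i has a nonzero component u_x with x ≠ i. Then the projective line l_{ix} through points i and x contains a point y, distinct from i and x, such that u_y ≠ 0. -/
variable {F : Type*} [Field F] [Fintype F] [DecidableEq F] {m n : ℕ}

/-- if `u ∈ R_i` has a nonzero component `u_x` with `x ≠ i`,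
then the line `l_{ix}` contains a point `y`, distinct from `i` and `x`,
with `u_y ≠ 0`. -/
theorem line_has_third_nonzero_point
    (h : Fin n → Fin m → F) (hm : 2 ≤ m)
    (hn : n = (Fintype.card F ^ m - 1) / (Fintype.card F - 1))
    (hnz : ∀ j, h j ≠ 0)
    (hnp : ∀ j k, j ≠ k → ∀ c : F, h j ≠ c • h k)
    (hcover : ∀ z : Fin m → F, z ≠ 0 → ∃ j, ∃ c : F, z = c • h j)
    (i x : Fin n) (u : Fin n → F)
    (hu : u ∈ principalComponent h i) (hx : u x ≠ 0) (hxi : x ≠ i) :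
    ∃ y ∈ lineThrough h i x, y ≠ i ∧ y ≠ x ∧ u y ≠ 0 := by
  classical
  set L := lineThrough h i x with hL
  set P : Submodule F (Fin m → F) := Submodule.span F {h i} with hP
  set s : Finset (Fin n) := Finset.univ.filter (fun k => k ∈ L ∧ k ≠ i) with hsdef
  set φ : (Fin n → F) →ₗ[F] (Fin m → F) :=
    { toFun := fun v => ∑ k ∈ s, v k • h k
      map_add' := by
        intro a b
        simp [add_smul, Finset.sum_add_distrib]
      map_smul' := by
        intro c a
        simp only [Pi.smul_apply, smul_eq_mul, RingHom.id_apply, Finset.smul_sum, mul_smul] } with hφ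
  have hφapp : ∀ v : Fin n → F, φ v = ∑ k ∈ s, v k • h k := fun v => rfl
  have key : principalComponent h i ≤ P.comap φ := by
    rw [principalComponent, Submodule.span_le]
    rintro w ⟨hwc, hw3, hwi⟩
    set t : Finset (Fin n) := Finset.univ.filter (fun j => w j ≠ 0) with htdef
    have hit : i ∈ t := by
      simp only [htdef, Finset.mem_filter, Finset.mem_univ, true_and, hwi]
      exact one_ne_zero
    have hcard : t.card = 3 := hw3
    have hcard2 : (t.erase i).card = 2 := by
      rw [Finset.card_erase_of_mem hit, hcard]
    obtain ⟨a, b, hab, habs⟩ := Finset.card_eq_two.1 hcard2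
    have hat : a ∈ t.erase i := by rw [habs]; simp
    have hbt : b ∈ t.erase i := by rw [habs]; simp
    have hai : a ≠ i := (Finset.mem_erase.1 hat).1
    have hbi : b ≠ i := (Finset.mem_erase.1 hbt).1
    have hwa : w a ≠ 0 := by
      have := (Finset.mem_erase.1 hat).2
      simpa [htdef] using this
    have hwb : w b ≠ 0 := by
      have := (Finset.mem_erase.1 hbt).2
      simpa [htdef] using this
    have hins : t = insert i ({a, b} : Finset (Fin n)) := by
      rw [← habs, Finset.insert_erase hit]
    have hsum : ∑ j, w j • h j = 0 := hwc
    have hsumt : ∑ j ∈ t, w j • h j = ∑ j, w j • h j := by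
      apply Finset.sum_subset (Finset.subset_univ t)
      intro j _ hj
      have : w j = 0 := by
        by_contra hc
        exact hj (by simp [htdef, hc])
      simp [this]
    have hia : i ∉ ({a, b} : Finset (Fin n)) := by
      simp [Ne.symm hai, Ne.symm hbi]
    have hthree : h i + (w a • h a + w b • h b) = 0 := by
      have := hsumt.trans hsum
      rw [hins, Finset.sum_insert hia, Finset.sum_pair hab, hwi, one_smul] at this
      exact this
    -- both-or-neither claim
    have hclaim : ∀ p q : Fin n, w p ≠ 0 → w q ≠ 0 →
        h i + (w p • h p + w q • h q) = 0 → p ∈ L → q ∈ L := by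
      intro p q hwp hwq heq hpL
      have hqval : h q = (w q)⁻¹ • (-(h i) - w p • h p) := by
        have : w q • h q = -(h i) - w p • h p := by
          rw [eq_sub_iff_add_eq]
          linear_combination (norm := module) heq
        rw [← this, smul_smul, inv_mul_cancel₀ hwq, one_smul]
      have hiL : h i ∈ Submodule.span F ({h i, h x} : Set (Fin m → F)) :=
        Submodule.subset_span (by simp)
      have hpmem : h p ∈ Submodule.span F ({h i, h x} : Set (Fin m → F)) := hpL
      show h q ∈ Submodule.span F ({h i, h x} : Set (Fin m → F))
      rw [hqval]
      exact Submodule.smul_mem _ _ (Submodule.sub_mem _ (Submodule.neg_mem _ hiL)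
        (Submodule.smul_mem _ _ hpmem))
    have hthree' : h i + (w b • h b + w a • h a) = 0 := by
      linear_combination (norm := module) hthree
    have habL : a ∈ L ↔ b ∈ L :=
      ⟨hclaim a b hwa hwb hthree, hclaim b a hwb hwa hthree'⟩
    -- compute φ w
    show (∑ k ∈ s, w k • h k) ∈ P
    have hsfilter : ∑ k ∈ s.filter (fun k => w k ≠ 0), w k • h k = ∑ k ∈ s, w k • h k := by
      apply Finset.sum_filter_of_ne
      intro k _ hk hc
      exact hk (by simp [hc])
    by_cases haL : a ∈ L
    · have hbL : b ∈ L := habL.1 haL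
      have hsf : s.filter (fun k => w k ≠ 0) = {a, b} := by
        apply Finset.ext
        intro k
        simp only [Finset.mem_filter, hsdef, Finset.mem_univ, true_and,
          Finset.mem_insert, Finset.mem_singleton]
        constructor
        · rintro ⟨⟨hkL, hki⟩, hwk⟩
          have : k ∈ t := by simp [htdef, hwk]
          rw [hins] at this
          simp only [Finset.mem_insert, Finset.mem_singleton] at this
          rcases this with h1 | h1 | h1
          · exact absurd h1 hki
          · exact Or.inl h1
          · exact Or.inr h1
        · rintro (rfl | rfl)
          · exact ⟨⟨haL, hai⟩, hwa⟩
          · exact ⟨⟨hbL, hbi⟩, hwb⟩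
      have : ∑ k ∈ s, w k • h k = w a • h a + w b • h b := by
        rw [← hsfilter, hsf, Finset.sum_pair hab]
      rw [this]
      have : w a • h a + w b • h b = -(h i) := by
        linear_combination (norm := module) hthree
      rw [this]
      exact Submodule.neg_mem _ (Submodule.subset_span rfl)
    · have hbL : b ∉ L := fun hb => haL (habL.2 hb)
      have hsf : s.filter (fun k => w k ≠ 0) = ∅ := by
        apply Finset.eq_empty_of_forall_notMem
        intro k hk
        simp only [Finset.mem_filter, hsdef, Finset.mem_univ, true_and] at hk
        obtain ⟨⟨hkL, hki⟩, hwk⟩ := hk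
        have : k ∈ t := by simp [htdef, hwk]
        rw [hins] at this
        simp only [Finset.mem_insert, Finset.mem_singleton] at this
        rcases this with h1 | h1 | h1
        · exact hki h1
        · exact haL (h1 ▸ hkL)
        · exact hbL (h1 ▸ hkL)
      have : ∑ k ∈ s, w k • h k = 0 := by
        rw [← hsfilter, hsf, Finset.sum_empty]
      rw [this]
      exact Submodule.zero_mem _
  -- apply to u
  have hφu : φ u ∈ P := key hu
  by_contra hcon
  push_neg at hcon
  have hxL : x ∈ L := by
    show h x ∈ Submodule.span F ({h i, h x} : Set (Fin m → F))
    exact Submodule.subset_span (by simp)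
  have hxs : x ∈ s := by simp [hsdef, hxL, hxi]
  have hφux : φ u = u x • h x := by
    rw [hφapp]
    apply Finset.sum_eq_single_of_mem x hxs
    intro k hk hkx
    simp only [hsdef, Finset.mem_filter, Finset.mem_univ, true_and] at hk
    rw [hcon k hk.1 hk.2 hkx, zero_smul]
  rw [hφux, hP, Submodule.mem_span_singleton] at hφu
  obtain ⟨c, hc⟩ := hφu
  apply hnp x i hxi ((u x)⁻¹ * c)
  rw [mul_smul, hc, inv_smul_smul₀ hx]
end

section
/- Let i ≠ j be coordinates of the q-ary Hamming code H_{q,m}, let R_i and R_j be the subspaces spanned by weight-3 codewords with 1 in coordinate i (respectively j), and let u ∈ R_i + R_j have a nonzero component u_x where the point x does not lie on the line l_{ij}. Then the projective plane P_{ijx} spanned by i, j, x contains a point y distinct from i, j, x with u_y ≠ 0. -/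
variable {F : Type*} [Field F] [Fintype F] [DecidableEq F] {m n : ℕ}

/-- The plane of `PG_{m−1}(q)` spanned by the points `a`, `b`, `c`, as a set
of coordinates. -/
def planeThrough (h : Fin n → Fin m → F) (a b c : Fin n) : Set (Fin n) :=
  {k | h k ∈ Submodule.span F {h a, h b, h c}}

lemma mem_principalComponent_extract (h : Fin n → Fin m → F)
    (W : Submodule F (Fin m → F)) (i : Fin n) (hiW : h i ∈ W)
    {v : Fin n → F} (hv : v ∈ principalComponent h i) :
    ∃ c : Fin n → F, c ∈ parityCheckCode h ∧ (∀ k, h k ∉ W → c k = 0) ∧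
      ∀ k, h k ∈ W → k ≠ i → c k = v k := by
  refine Submodule.span_induction (p := fun v _ => ∃ c : Fin n → F,
    c ∈ parityCheckCode h ∧ (∀ k, h k ∉ W → c k = 0) ∧
    ∀ k, h k ∈ W → k ≠ i → c k = v k) ?_ ?_ ?_ ?_ hv
  · rintro t ⟨htc, htn, hti⟩
    by_cases hex : ∃ a, a ≠ i ∧ h a ∈ W ∧ t a ≠ 0
    · obtain ⟨a, hai, haW, hta⟩ := hex
      refine ⟨t, htc, ?_, fun k _ _ => rfl⟩
      intro k hkW
      by_contra htk
      have hki : k ≠ i := fun e => hkW (e ▸ hiW)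
      have hka : k ≠ a := fun e => hkW (e ▸ haW)
      have hti' : t i ≠ 0 := by rw [hti]; exact one_ne_zero
      have hsub : ({i, a, k} : Finset (Fin n)) ⊆ Finset.univ.filter (fun l => t l ≠ 0) := by
        intro l hl
        simp only [Finset.mem_insert, Finset.mem_singleton] at hl
        rcases hl with rfl | rfl | rfl <;> simp [hti', hta, htk]
      have hcard : ({i, a, k} : Finset (Fin n)).card = 3 := by
        rw [Finset.card_insert_of_notMem (by simp [hai.symm, hki.symm]),
          Finset.card_insert_of_notMem (by simp [hka.symm]), Finset.card_singleton]
      have htn' : (Finset.univ.filter (fun l => t l ≠ 0)).card = 3 := by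
        simpa [hammingNorm, Finset.filter] using htn
      have hfil : Finset.univ.filter (fun l => t l ≠ 0) = {i, a, k} :=
        (Finset.eq_of_subset_of_card_le hsub (by rw [htn', hcard])).symm
      have hzero : ∀ l, l ∉ ({i, a, k} : Finset (Fin n)) → t l = 0 := by
        intro l hl
        by_contra hne
        exact hl (hfil ▸ Finset.mem_filter.mpr ⟨Finset.mem_univ l, hne⟩)
      have hsum : t i • h i + t a • h a + t k • h k = 0 := by
        have heq : ∑ l ∈ ({i, a, k} : Finset (Fin n)), t l • h l = ∑ l, t l • h l :=
          Finset.sum_subset (Finset.subset_univ _) (fun l _ hl => by rw [hzero l hl, zero_smul])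
        have hc0 : ∑ l, t l • h l = 0 := htc
        rw [Finset.sum_insert (by simp [hai.symm, hki.symm]),
          Finset.sum_insert (by simp [hka.symm]), Finset.sum_singleton, ← add_assoc] at heq
        rw [heq, hc0]
      have hmem : t k • h k ∈ W := by
        have : t k • h k = -(t i • h i + t a • h a) := by linear_combination (norm := module) hsum
        rw [this]
        exact neg_mem (add_mem (W.smul_mem _ hiW) (W.smul_mem _ haW))
      have : h k ∈ W := by
        have := W.smul_mem (t k)⁻¹ hmem
        rwa [inv_smul_smul₀ htk] at this
      exact hkW this
    · push_neg at hex
      exact ⟨0, zero_mem _, fun k _ => rfl, fun k hkW hki => (hex k hki hkW).symm⟩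
  · exact ⟨0, zero_mem _, fun k _ => rfl, fun k _ _ => rfl⟩
  · rintro v₁ v₂ _ _ ⟨c₁, hc₁, hs₁, ha₁⟩ ⟨c₂, hc₂, hs₂, ha₂⟩
    exact ⟨c₁ + c₂, add_mem hc₁ hc₂,
      fun k hk => by simp [Pi.add_apply, hs₁ k hk, hs₂ k hk],
      fun k hk hki => by simp [Pi.add_apply, ha₁ k hk hki, ha₂ k hk hki]⟩
  · rintro r v₁ _ ⟨c₁, hc₁, hs₁, ha₁⟩
    exact ⟨r • c₁, Submodule.smul_mem _ r hc₁,
      fun k hk => by simp [Pi.smul_apply, hs₁ k hk],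
      fun k hk hki => by simp [Pi.smul_apply, ha₁ k hk hki]⟩

/-- if `i ≠ j`, `u ∈ R_i + R_j` has a nonzero component `u_x`
where `x` is not on the line `l_{ij}`, then the plane `P_{ijx}` contains a
point `y` distinct from `i`, `j`, `x` with `u_y ≠ 0`. -/
theorem plane_has_fourth_nonzero_point
    (h : Fin n → Fin m → F) (hm : 2 ≤ m)
    (hn : n = (Fintype.card F ^ m - 1) / (Fintype.card F - 1))
    (hnz : ∀ j, h j ≠ 0)
    (hnp : ∀ j k, j ≠ k → ∀ c : F, h j ≠ c • h k)
    (hcover : ∀ z : Fin m → F, z ≠ 0 → ∃ j, ∃ c : F, z = c • h j)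
    (i j x : Fin n) (hij : i ≠ j) (u : Fin n → F)
    (hu : u ∈ principalComponent h i ⊔ principalComponent h j)
    (hx : u x ≠ 0) (hxl : x ∉ lineThrough h i j) :
    ∃ y ∈ planeThrough h i j x, y ≠ i ∧ y ≠ j ∧ y ≠ x ∧ u y ≠ 0 := by
  by_contra hcon
  push_neg at hcon
  set W : Submodule F (Fin m → F) := Submodule.span F {h i, h j, h x} with hW
  have hiW : h i ∈ W := Submodule.subset_span (by simp)
  have hjW : h j ∈ W := Submodule.subset_span (by simp)
  have hxW : h x ∈ W := Submodule.subset_span (by simp)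
  have hxi : x ≠ i := by
    rintro rfl
    exact hxl (Submodule.subset_span (by simp))
  have hxj : x ≠ j := by
    rintro rfl
    exact hxl (Submodule.subset_span (by simp))
  obtain ⟨v, hv, w, hw, hvw⟩ := Submodule.mem_sup.mp hu
  obtain ⟨c₁, hc₁, hs₁, ha₁⟩ := mem_principalComponent_extract h W i hiW hv
  obtain ⟨c₂, hc₂, hs₂, ha₂⟩ := mem_principalComponent_extract h W j hjW hw
  set c : Fin n → F := c₁ + c₂ with hc
  have hccode : ∑ l, c l • h l = 0 := add_mem hc₁ hc₂
  have hcx : c x = u x := by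
    rw [hc, Pi.add_apply, ha₁ x hxW hxi, ha₂ x hxW hxj, ← hvw]; rfl
  have hczero : ∀ l, l ∉ ({i, j, x} : Finset (Fin n)) → c l = 0 := by
    intro l hl
    simp only [Finset.mem_insert, Finset.mem_singleton, not_or] at hl
    obtain ⟨hli, hlj, hlx⟩ := hl
    by_cases hlW : h l ∈ W
    · have : u l = 0 := hcon l hlW hli hlj hlx
      rw [hc, Pi.add_apply, ha₁ l hlW hli, ha₂ l hlW hlj, ← this, ← hvw]; rfl
    · rw [hc, Pi.add_apply, hs₁ l hlW, hs₂ l hlW, add_zero]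
  have hsum : c i • h i + c j • h j + c x • h x = 0 := by
    have heq : ∑ l ∈ ({i, j, x} : Finset (Fin n)), c l • h l = ∑ l, c l • h l :=
      Finset.sum_subset (Finset.subset_univ _) (fun l _ hl => by rw [hczero l hl, zero_smul])
    rw [Finset.sum_insert (by simp [hij, hxi.symm]),
      Finset.sum_insert (by simp [hxj.symm]), Finset.sum_singleton, ← add_assoc] at heq
    rw [heq, hccode]
  apply hxl
  have hmem : c x • h x ∈ Submodule.span F {h i, h j} := by
    have : c x • h x = -(c i • h i + c j • h j) := by linear_combination (norm := module) hsum
    rw [this]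
    exact neg_mem (add_mem
      (Submodule.smul_mem _ _ (Submodule.subset_span (by simp)))
      (Submodule.smul_mem _ _ (Submodule.subset_span (by simp))))
  have hcx0 : c x ≠ 0 := by rw [hcx]; exact hx
  have := Submodule.smul_mem (Submodule.span F {h i, h j}) (c x)⁻¹ hmem
  rwa [inv_smul_smul₀ hcx0] at this
end

section
/- Let F_q have characteristic 2, m ≥ 4, and let c_1,...,c_m be the vectors defined via the map ξ from sums of the independent parity-check columns h_1,...,h_m (e.g. c_1 = ξ(h_1) + ξ(h_1+h_2+h_3) + ξ(h_1+h_2+h_4) + ξ(h_1+h_3+h_4), etc.). Then each c_j is a codeword of the q-ary Hamming code H_{q,m}. -/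
variable {F : Type*} [Field F] [Fintype F] [DecidableEq F] {m n : ℕ}

/-- The Etzion–Vardy coset representatives `c_j` (1-indexed, characteristic 2
version): built from `ξ` applied to sums of the independent parity-check
columns `B 1, …, B m`. -/
def evC (ξ : (Fin m → F) → (Fin n → F)) (B : ℕ → Fin m → F) (j : ℕ) : Fin n → F :=
  if j = 1 then
    ξ (B 1) + ξ (B 1 + B 2 + B 3) + ξ (B 1 + B 2 + B 4) + ξ (B 1 + B 3 + B 4)
  else if j = 2 then
    ξ (B 1) + ξ (B 2) + ξ (B 1 + B 3 + B 4) + ξ (B 2 + B 3 + B 4)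
  else if j = 4 then
    (∑ i ∈ Finset.Icc 1 4, ξ (B i)) + ξ (B 1 + B 2 + B 3) + ξ (B 1 + B 2 + B 4)
      + ξ (B 1 + B 3 + B 4) + ξ (B 2 + B 3 + B 4)
  else if Odd j then
    (∑ i ∈ Finset.Icc 1 j, ξ (B i)) + ξ (∑ i ∈ Finset.Icc 1 j, B i)
  else
    (∑ i ∈ Finset.Icc 1 j, ξ (B i)) + ξ (∑ i ∈ Finset.Icc 1 (j / 2), B i)
      + ξ (∑ i ∈ Finset.Icc (j / 2 + 1) j, B i)

/-- over a finite field of characteristic 2, with `m ≥ 4`, each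
of the Etzion–Vardy vectors `c_1, …, c_m` is a codeword of the `q`-ary Hamming
code `H_{q,m}`. -/
theorem evC_mem_hamming [CharP F 2]
    (h : Fin n → Fin m → F) (hm : 4 ≤ m)
    (hn : n = (Fintype.card F ^ m - 1) / (Fintype.card F - 1))
    (hnz : ∀ j, h j ≠ 0)
    (hnp : ∀ j k, j ≠ k → ∀ c : F, h j ≠ c • h k)
    (hcover : ∀ z : Fin m → F, z ≠ 0 → ∃ j, ∃ c : F, z = c • h j)
    (e : Fin m → Fin n) (he : Function.Injective e)
    (hind : LinearIndependent F (h ∘ e))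
    (B : ℕ → Fin m → F)
    (hB : ∀ k (hk1 : 1 ≤ k) (hk2 : k ≤ m), B k = h (e ⟨k - 1, by omega⟩))
    (ξ : (Fin m → F) → (Fin n → F))
    (hξ : ∀ z : Fin m → F, z ≠ 0 → ∃ jc : Fin n, ∃ α : F, α ≠ 0 ∧
      z = α • h jc ∧ ξ z = Function.update (0 : Fin n → F) jc α) :
    ∀ j, 1 ≤ j → j ≤ m → evC ξ B j ∈ parityCheckCode h := by
  have h20 : (2 : F) = 0 := by exact_mod_cast CharP.cast_eq_zero F 2
  classical
  set φ : (Fin n → F) →ₗ[F] (Fin m → F) :=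
    { toFun := fun x => ∑ k, x k • h k
      map_add' := by intro x y; simp [add_smul, Finset.sum_add_distrib]
      map_smul' := by intro c x; simp [mul_smul, Finset.smul_sum] }
    with hφdef
  have hmem : ∀ x : Fin n → F, φ x = 0 → x ∈ parityCheckCode h := fun x hx => hx
  have hkey : ∀ z : Fin m → F, z ≠ 0 → φ (ξ z) = z := by
    intro z hz0
    obtain ⟨jc, α, hα0, hz, hup⟩ := hξ z hz0
    simp only [hφdef, LinearMap.coe_mk, AddHom.coe_mk, hup, Function.update_apply,
      Pi.zero_apply, ite_smul, zero_smul]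
    rw [Finset.sum_ite_eq' Finset.univ jc fun k => α • h k]
    simp [← hz]
  have hBnz : ∀ S : Finset ℕ, S.Nonempty → (∀ i ∈ S, 1 ≤ i ∧ i ≤ m) →
      ∑ i ∈ S, B i ≠ 0 := by
    intro S hS hSm hsum
    have hmemb : ∀ i : {x // x ∈ S}, i.1 - 1 < m := fun i => by
      have := hSm i.1 i.2; omega
    set T : Finset (Fin m) := S.attach.image (fun i => (⟨i.1 - 1, hmemb i⟩ : Fin m)) with hT
    have hsum' : ∑ t ∈ T, (1:F) • (h ∘ e) t = 0 := by
      rw [hT, Finset.sum_image]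
      · simp only [one_smul]
        rw [← funext_iff.mpr (congrFun hsum), ← Finset.sum_attach S B]
        apply Finset.sum_congr rfl
        intro i _
        have hi := hSm i.1 i.2
        rw [hB i.1 hi.1 hi.2]
        rfl
      · intro a _ b _ hab
        have ha := hSm a.1 a.2; have hb := hSm b.1 b.2
        have : a.1 - 1 = b.1 - 1 := congrArg Fin.val hab
        exact Subtype.ext (by omega)
    obtain ⟨i0, hi0⟩ := hS
    have := linearIndependent_iff'.mp hind T (fun _ => (1:F)) hsum'
      ⟨i0 - 1, hmemb ⟨i0, hi0⟩⟩
      (Finset.mem_image.mpr ⟨⟨i0, hi0⟩, Finset.mem_attach _ _, rfl⟩)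
    exact one_ne_zero this
  have hBnz' : ∀ i, 1 ≤ i → i ≤ m → B i ≠ 0 := by
    intro i h1 h2
    have := hBnz {i} ⟨i, by simp⟩ (by intro x hx; simp at hx; omega)
    simpa using this
  have hvv : ∀ v : Fin m → F, v + v = 0 := by
    intro v; funext k
    show v k + v k = 0
    linear_combination v k * h20
  have hsumIcc : ∀ a b : ℕ, (∀ i, a ≤ i → i ≤ b → 1 ≤ i ∧ i ≤ m) →
      φ (∑ i ∈ Finset.Icc a b, ξ (B i)) = ∑ i ∈ Finset.Icc a b, B i := by
    intro a b hab
    rw [map_sum]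
    apply Finset.sum_congr rfl
    intro i hi
    rw [Finset.mem_Icc] at hi
    exact hkey _ (hBnz' i (hab i hi.1 hi.2).1 (hab i hi.1 hi.2).2)
  intro j hj1 hjm
  have hnzt : ∀ a b c : ℕ, 1 ≤ a → a < b → b < c → c ≤ m → B a + B b + B c ≠ 0 := by
    intro a b c h1 h2 h3 h4
    have hs : ∑ i ∈ ({a, b, c} : Finset ℕ), B i = B a + B b + B c := by
      rw [Finset.sum_insert (by simp; omega), Finset.sum_insert (by simp; omega),
        Finset.sum_singleton, add_assoc]
    rw [← hs]
    exact hBnz _ ⟨a, by simp⟩ (by intro x hx; simp at hx; omega)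
  unfold evC
  split_ifs with h1 h2 h4 hodd
  · apply hmem
    rw [map_add, map_add, map_add, hkey _ (hBnz' 1 le_rfl (by omega)),
      hkey _ (hnzt 1 2 3 (by omega) (by omega) (by omega) (by omega)),
      hkey _ (hnzt 1 2 4 (by omega) (by omega) (by omega) (by omega)),
      hkey _ (hnzt 1 3 4 (by omega) (by omega) (by omega) (by omega))]
    funext k
    show B 1 k + (B 1 k + B 2 k + B 3 k) + (B 1 k + B 2 k + B 4 k)
        + (B 1 k + B 3 k + B 4 k) = 0
    linear_combination (2 * B 1 k + B 2 k + B 3 k + B 4 k) * h20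
  · apply hmem
    rw [map_add, map_add, map_add, hkey _ (hBnz' 1 le_rfl (by omega)),
      hkey _ (hBnz' 2 (by omega) (by omega)),
      hkey _ (hnzt 1 3 4 (by omega) (by omega) (by omega) (by omega)),
      hkey _ (hnzt 2 3 4 (by omega) (by omega) (by omega) (by omega))]
    funext k
    show B 1 k + B 2 k + (B 1 k + B 3 k + B 4 k) + (B 2 k + B 3 k + B 4 k) = 0
    linear_combination (B 1 k + B 2 k + B 3 k + B 4 k) * h20
  · apply hmem
    rw [map_add, map_add, map_add, map_add,
      hsumIcc 1 4 (by intro i hi1 hi2; omega),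
      hkey _ (hnzt 1 2 3 (by omega) (by omega) (by omega) (by omega)),
      hkey _ (hnzt 1 2 4 (by omega) (by omega) (by omega) (by omega)),
      hkey _ (hnzt 1 3 4 (by omega) (by omega) (by omega) (by omega)),
      hkey _ (hnzt 2 3 4 (by omega) (by omega) (by omega) (by omega))]
    have hIcc : Finset.Icc (1:ℕ) 4 = {1, 2, 3, 4} := by decide
    rw [hIcc, Finset.sum_insert (by decide), Finset.sum_insert (by decide),
      Finset.sum_insert (by decide), Finset.sum_singleton]
    funext k
    show B 1 k + (B 2 k + (B 3 k + B 4 k)) + (B 1 k + B 2 k + B 3 k)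
        + (B 1 k + B 2 k + B 4 k) + (B 1 k + B 3 k + B 4 k)
        + (B 2 k + B 3 k + B 4 k) = 0
    linear_combination (2 * B 1 k + 2 * B 2 k + 2 * B 3 k + 2 * B 4 k) * h20
  · apply hmem
    rw [map_add, hsumIcc 1 j (by intro i hi1 hi2; omega),
      hkey _ (hBnz (Finset.Icc 1 j) (Finset.nonempty_Icc.mpr hj1)
        (by intro i hi; rw [Finset.mem_Icc] at hi; omega))]
    exact hvv _
  ·
    have hje : Even j := Nat.not_odd_iff_even.mp hodd
    have hj6 : 6 ≤ j := by
      rcases hje with ⟨r, hr⟩; omega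
    apply hmem
    rw [map_add, map_add, hsumIcc 1 j (by intro i hi1 hi2; omega),
      hkey _ (hBnz (Finset.Icc 1 (j/2)) (Finset.nonempty_Icc.mpr (by omega))
        (by intro i hi; rw [Finset.mem_Icc] at hi; omega)),
      hkey _ (hBnz (Finset.Icc (j/2+1) j) (Finset.nonempty_Icc.mpr (by omega))
        (by intro i hi; rw [Finset.mem_Icc] at hi; omega))]
    have hsplit : (∑ i ∈ Finset.Icc 1 (j/2), B i) + ∑ i ∈ Finset.Icc (j/2+1) j, B i
        = ∑ i ∈ Finset.Icc 1 j, B i := by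
      rw [show (1:ℕ) = 0 + 1 from rfl, Finset.Icc_add_one_left_eq_Ioc, zero_add,
        Finset.Icc_add_one_left_eq_Ioc]
      exact Finset.sum_Ioc_consecutive _ (by omega) (by omega)
    rw [add_assoc, hsplit]
    exact hvv _
end

section
/- In the switching of i-components of a q-ary Hamming code, the set left after removing m disjoint principal-component cosets still has full Hamming-code rank: if m ≥ 2 and R_1+c_1,...,R_m+c_m are pairwise disjoint cosets with dim R_i = q^{m−1}−1 inside H_{q,m}, then |H_{q,m} \ ∪_i (R_i+c_i)| = q^{n−m} − m·q^{q^{m−1}−1} > (1/q)·q^{n−m}, and consequently the F_q-span of H_{q,m} \ ∪_i (R_i+c_i) equals H_{q,m} (has dimension n − m). -/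
variable {F : Type*} [Field F] [Fintype F] [DecidableEq F] {m n : ℕ}

lemma geom_mul (q : ℕ) (a : ℕ) (hq : 1 ≤ q) :
    (q - 1) * ∑ i ∈ Finset.range a, q ^ i + 1 = q ^ a := by
  obtain ⟨r, rfl⟩ : ∃ r, q = r + 1 := ⟨q - 1, by omega⟩
  simp only [Nat.add_sub_cancel]
  induction a with
  | zero => simp
  | succ a ih => rw [Finset.sum_range_succ, pow_succ, Nat.mul_add, Nat.add_right_comm, ih]; ring

lemma lt_two_pow_pred (m : ℕ) (hm : 3 ≤ m) : m < 2 ^ (m - 1) := by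
  induction m with
  | zero => omega
  | succ k ih =>
    rcases Nat.lt_or_ge k 3 with hk | hk
    · interval_cases k <;> simp_all
    · have h1 := ih (by omega)
      have h2 : k - 1 + 1 = (k+1) - 1 := by omega
      rw [← h2, pow_succ]
      omega

lemma two_mul_le_two_pow_pred (m : ℕ) (hm : 4 ≤ m) : 2 * m ≤ 2 ^ (m - 1) := by
  induction m with
  | zero => omega
  | succ k ih =>
    rcases Nat.lt_or_ge k 4 with hk | hk
    · interval_cases k <;> simp_all
    · have h1 := ih (by omega)
      have h2 : k - 1 + 1 = (k+1) - 1 := by omega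
      rw [← h2, pow_succ]
      omega

lemma main_arith (q m : ℕ) (hq : 2 ≤ q) (hm : 2 ≤ m)
    (hle : m * q ^ (q ^ (m-1) - 1) ≤ q ^ (∑ i ∈ Finset.range m, q ^ i - m)) :
    m * q ^ (q ^ (m-1) - 1) + q ^ (∑ i ∈ Finset.range m, q ^ i - m - 1)
      < q ^ (∑ i ∈ Finset.range m, q ^ i - m) := by
  have hS' : ∀ a : ℕ, ∑ i ∈ Finset.range m, q ^ i - m - a
      = q ^ (m-1) - 1 + (∑ i ∈ Finset.range (m-1), q ^ i - (m-1)) - a := by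
    intro a
    have hSsplit : ∑ i ∈ Finset.range m, q ^ i
        = (∑ i ∈ Finset.range (m-1), q ^ i) + q ^ (m-1) := by
      conv_lhs => rw [show m = (m-1)+1 by omega, Finset.sum_range_succ]
    have hqm1 : 2 ≤ q ^ (m-1) := le_trans hq (Nat.le_self_pow (by omega) q)
    have hmS' : m - 1 ≤ ∑ i ∈ Finset.range (m-1), q ^ i := by
      have h2 : ∑ i ∈ Finset.range (m-1), 2 ^ i ≤ ∑ i ∈ Finset.range (m-1), q ^ i :=
        Finset.sum_le_sum fun i _ => Nat.pow_le_pow_left hq i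
      have h1 := geom_mul 2 (m-1) (by omega)
      have := Nat.lt_two_pow_self (n := m-1)
      omega
    omega
  set d : ℕ := q ^ (m-1) - 1 with hd
  set k' : ℕ := ∑ i ∈ Finset.range (m-1), q ^ i - (m-1) with hk'
  have hkey : ∑ i ∈ Finset.range m, q ^ i - m = d + k' := by
    have := hS' 0; omega
  have hdpos : 0 < q ^ d := Nat.pow_pos (n := d) (by omega)
  have h2S' : 2 ^ (m-1) - 1 ≤ ∑ i ∈ Finset.range (m-1), q ^ i := by
    have h2 : ∑ i ∈ Finset.range (m-1), 2 ^ i ≤ ∑ i ∈ Finset.range (m-1), q ^ i :=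
      Finset.sum_le_sum fun i _ => Nat.pow_le_pow_left hq i
    have h1 := geom_mul 2 (m-1) (by omega)
    omega
  rw [hkey, pow_add] at hle
  rw [hS' 1, hkey]
  rcases Nat.lt_or_ge m 3 with hm2 | hm3
  · -- m = 2 : contradiction with hle
    exfalso
    have hm2' : m = 2 := by omega
    have hS1 : ∑ i ∈ Finset.range (m-1), q ^ i = 1 := by
      rw [hm2']; simp
    have hk0 : k' = 0 := by rw [hk', hS1]; omega
    rw [hk0, pow_zero, mul_one] at hle
    have : 2 * q ^ d ≤ m * q ^ d := Nat.mul_le_mul_right _ hm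
    omega
  · have hk'1 : 1 ≤ k' → m + 1 + q ^ (k'-1) ≤ q * q ^ (k'-1) →
        m * q ^ d + q ^ (d + k' - 1) < q ^ (d + k') := by
      intro h1 h2
      have he : d + k' - 1 = d + (k' - 1) := by omega
      have he2 : k' = (k' - 1) + 1 := by omega
      rw [he, pow_add]
      conv_rhs => rw [he2]
      rw [pow_add, pow_add, pow_one]
      calc m * q ^ d + q ^ d * q ^ (k'-1)
          = (m + q ^ (k'-1)) * q ^ d := by ring
        _ < (q * q ^ (k'-1)) * q ^ d := by
            apply Nat.mul_lt_mul_of_lt_of_le _ le_rfl hdpos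
            omega
        _ = q ^ d * (q ^ (k'-1) * q) := by ring
    rcases Nat.lt_or_ge m 4 with hm3' | hm4
    · -- m = 3
      have hm3'' : m = 3 := by omega
      have hS'v : ∑ i ∈ Finset.range (m-1), q ^ i = 1 + q := by
        rw [hm3'']; simp [Finset.sum_range_succ]
      have hk'v : k' = q - 1 := by rw [hk', hS'v]; omega
      rcases Nat.lt_or_ge q 3 with hq2 | hq3
      · -- q = 2 : contradiction with hle
        exfalso
        have hq2' : q = 2 := by omega
        have hk1 : k' = 1 := by omega
        rw [hk1, pow_one] at hle
        have h3 : 3 * q ^ d ≤ m * q ^ d := Nat.mul_le_mul_right _ (by omega)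
        have h4 : q ^ d * q = 2 * q ^ d := by rw [hq2']; ring
        omega
      · -- q ≥ 3
        apply hk'1 (by omega)
        have hqk : q ≤ q ^ (k' - 1) := by
          calc q = q ^ 1 := (pow_one q).symm
          _ ≤ q ^ (k' - 1) := Nat.pow_le_pow_right (by omega) (by omega)
        nlinarith
    · -- m ≥ 4
      have hk'' : 2 * m ≤ 2 ^ (m-1) := two_mul_le_two_pow_pred m hm4
      have hkm : m ≤ k' := by omega
      have hmlt : m < 2 ^ (m - 1) := lt_two_pow_pred m (by omega)
      have h2k : 2 ^ (m-1) ≤ 2 ^ (k' - 1) := Nat.pow_le_pow_right (by omega) (by omega)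
      have hq2k : 2 ^ (k'-1) ≤ q ^ (k'-1) := Nat.pow_le_pow_left hq _
      apply hk'1 (by omega)
      nlinarith

lemma card_submodule' {M : Type*} [AddCommGroup M] [Module F M] [Finite M]
    (W : Submodule F M) : Nat.card W = Fintype.card F ^ Module.finrank F W := by
  have : Fintype W := Fintype.ofFinite W
  rw [Nat.card_eq_fintype_card, Module.card_eq_pow_finrank (K := F)]

/-- removing `m` pairwise disjoint principal-component cosets
from `H_{q,m}` leaves a set of cardinality `q^{n−m} − m·q^{q^{m−1}−1}`, which
is larger than `(1/q)·q^{n−m} = q^{n−m−1}`, and consequently this set still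
spans the whole Hamming code (a subspace of dimension `n − m`). -/
theorem leftover_set_spans_hamming
    (h : Fin n → Fin m → F) (hm : 2 ≤ m)
    (hn : n = (Fintype.card F ^ m - 1) / (Fintype.card F - 1))
    (hnz : ∀ j, h j ≠ 0)
    (hnp : ∀ j k, j ≠ k → ∀ c : F, h j ≠ c • h k)
    (hcover : ∀ z : Fin m → F, z ≠ 0 → ∃ j, ∃ c : F, z = c • h j)
    (R : Fin m → Submodule F (Fin n → F))
    (hRsub : ∀ i, R i ≤ parityCheckCode h)
    (hRdim : ∀ i, Module.finrank F (R i) = Fintype.card F ^ (m - 1) - 1)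
    (c : Fin m → (Fin n → F)) (hc : ∀ i, c i ∈ parityCheckCode h)
    (hdisj : ∀ i j, i ≠ j →
      Disjoint {w | ∃ r ∈ R i, w = r + c i} {w | ∃ r ∈ R j, w = r + c j})
    (D : Set (Fin n → F))
    (hD : D = (parityCheckCode h : Set (Fin n → F)) \
        ⋃ i : Fin m, {w | ∃ r ∈ R i, w = r + c i}) :
    Nat.card D =
        Fintype.card F ^ (n - m) -
          m * Fintype.card F ^ (Fintype.card F ^ (m - 1) - 1) ∧
    Fintype.card F ^ (n - m - 1) < Nat.card D ∧
    Submodule.span F D = parityCheckCode h ∧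
    Module.finrank F (parityCheckCode h) = n - m := by
  classical
  have hq2 : 2 ≤ Fintype.card F := Fintype.one_lt_card
  -- n is the geometric sum
  have hgeom := geom_mul (Fintype.card F) m (by omega)
  have hn' : n = ∑ i ∈ Finset.range m, Fintype.card F ^ i := by
    rw [hn]
    have h1 : Fintype.card F ^ m - 1
        = (Fintype.card F - 1) * ∑ i ∈ Finset.range m, Fintype.card F ^ i := by omega
    rw [h1, Nat.mul_div_cancel_left _ (by omega : 0 < Fintype.card F - 1)]
  -- rank of the code
  let φ : (Fin n → F) →ₗ[F] (Fin m → F) := Fintype.linearCombination F h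
  have hker : parityCheckCode h = LinearMap.ker φ := by
    ext x
    simp [parityCheckCode, LinearMap.mem_ker, φ, Fintype.linearCombination_apply,
      Submodule.mem_mk, Set.mem_setOf_eq]
  have hrange : LinearMap.range φ = ⊤ := by
    rw [Submodule.eq_top_iff']
    intro z
    by_cases hz : z = 0
    · subst hz; exact zero_mem _
    · obtain ⟨j, cc, rfl⟩ := hcover z hz
      apply Submodule.smul_mem
      exact ⟨Pi.single j 1, by simp [φ, Fintype.linearCombination_apply, Pi.single_apply]⟩
  have hrn := LinearMap.finrank_range_add_finrank_ker φ
  rw [hrange, finrank_top, Module.finrank_fin_fun, Module.finrank_fin_fun] at hrn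
  have hfr : Module.finrank F (parityCheckCode h) = n - m := by rw [hker]; omega
  have hmn : m ≤ n := by omega
  -- cardinalities
  have hcard_code : (parityCheckCode h : Set (Fin n → F)).ncard
      = Fintype.card F ^ (n - m) := by
    rw [← Nat.card_coe_set_eq]
    have := card_submodule' (parityCheckCode h)
    rw [hfr] at this
    exact this
  -- the cosets and their union
  set S : Fin m → Set (Fin n → F) := fun i => {w | ∃ r ∈ R i, w = r + c i} with hSdef
  have himg : ∀ i, S i = (fun w => w + c i) '' (R i : Set _) := by
    intro i; ext w
    constructor
    · rintro ⟨r, hr, rfl⟩; exact ⟨r, hr, rfl⟩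
    · rintro ⟨r, hr, rfl⟩; exact ⟨r, hr, rfl⟩
  have hScard : ∀ i, (S i).ncard
      = Fintype.card F ^ (Fintype.card F ^ (m - 1) - 1) := by
    intro i
    rw [himg i, Set.ncard_image_of_injective _ (add_left_injective (c i)),
      ← Nat.card_coe_set_eq]
    have := card_submodule' (R i)
    rw [hRdim i] at this
    exact this
  have hUcard : (⋃ i, S i).ncard
      = m * Fintype.card F ^ (Fintype.card F ^ (m - 1) - 1) := by
    rw [Set.ncard_eq_toFinset_card', Set.toFinset_iUnion]
    rw [Finset.card_biUnion (fun i _ j _ hij => Set.disjoint_toFinset.mpr (hdisj i j hij))]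
    have : ∀ i : Fin m, (S i).toFinset.card
        = Fintype.card F ^ (Fintype.card F ^ (m - 1) - 1) := by
      intro i; rw [← Set.ncard_eq_toFinset_card', hScard i]
    rw [Finset.sum_congr rfl (fun i _ => this i)]
    simp [Finset.card_univ, mul_comm]
  have hUsub : (⋃ i, S i) ⊆ (parityCheckCode h : Set (Fin n → F)) := by
    intro w hw
    obtain ⟨i, hi⟩ := Set.mem_iUnion.mp hw
    obtain ⟨r, hr, rfl⟩ := hi
    exact (parityCheckCode h).add_mem (hRsub i hr) (hc i)
  have hUle : (⋃ i, S i).ncard ≤ (parityCheckCode h : Set (Fin n → F)).ncard :=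
    Set.ncard_le_ncard hUsub (Set.toFinite _)
  -- part 1 : cardinality of D
  have hDcard : Nat.card D
      = Fintype.card F ^ (n - m) - m * Fintype.card F ^ (Fintype.card F ^ (m - 1) - 1) := by
    rw [Nat.card_coe_set_eq, hD, Set.ncard_diff hUsub (Set.toFinite _), hUcard, hcard_code]
  -- pigeonhole & the key inequality
  have hle : m * Fintype.card F ^ (Fintype.card F ^ (m - 1) - 1)
      ≤ Fintype.card F ^ (n - m) := by
    rw [← hcard_code, ← hUcard]; exact hUle
  have harith := main_arith (Fintype.card F) m hq2 hm (by rw [← hn']; exact hle)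
  rw [← hn'] at harith
  have hDlt : Fintype.card F ^ (n - m - 1) < Nat.card D := by
    rw [hDcard]; omega
  refine ⟨hDcard, hDlt, ?_, hfr⟩
  -- the span
  have hDsub : D ⊆ (parityCheckCode h : Set (Fin n → F)) := by
    rw [hD]; exact Set.diff_subset
  have hWle : Submodule.span F D ≤ parityCheckCode h := Submodule.span_le.mpr hDsub
  rcases eq_or_lt_of_le hWle with heq | hlt
  · exact heq
  · exfalso
    have hfrW : Module.finrank F (Submodule.span F D) < n - m := by
      rw [← hfr]; exact Submodule.finrank_lt_finrank_of_lt hlt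
    have hcardW : Nat.card (Submodule.span F D)
        = Fintype.card F ^ Module.finrank F (Submodule.span F D) :=
      card_submodule' _
    have hDleW : Nat.card D ≤ Nat.card (Submodule.span F D) := by
      rw [Nat.card_coe_set_eq]
      calc D.ncard ≤ (Submodule.span F D : Set _).ncard :=
            Set.ncard_le_ncard Submodule.subset_span (Set.toFinite _)
        _ = Nat.card (Submodule.span F D) := (Nat.card_coe_set_eq _).symm
    have hpow : Fintype.card F ^ Module.finrank F (Submodule.span F D)
        ≤ Fintype.card F ^ (n - m - 1) :=
      Nat.pow_le_pow_right (by omega) (by omega)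
    omega
end
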